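/- arXiv:1802.10563 — 6 statements merged into one kernel-verified Lean document; each statement's English description precedes it below -/
import Mathlib

section
/- Let N be a norm on ℝ² whose restriction to ℝ² \ {0} is of class C¹. Then the Gauss map G : ∂B_N(0,1) → S¹ is surjective. -/
open Set Metric
open scoped RealInnerProductSpace

noncomputable section

/-- for a norm `N` on ℝ² of class `C¹` away from `0`, the Gauss map
`G : ∂B_N(0,1) → S¹`, `G x = ∇N(x)/‖∇N(x)‖`, is surjective. -/
theorem gauss_map_surjective
    (N : EuclideanSpace ℝ (Fin 2) → ℝ)
    (hN_add : ∀ x y : EuclideanSpace ℝ (Fin 2), N (x + y) ≤ N x + N y)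
    (hN_smul : ∀ (c : ℝ) (x : EuclideanSpace ℝ (Fin 2)), N (c • x) = |c| * N x)
    (hN_zero : ∀ x : EuclideanSpace ℝ (Fin 2), N x = 0 → x = 0)
    (hN_C1 : ContDiffOn ℝ 1 N ({0}ᶜ : Set (EuclideanSpace ℝ (Fin 2)))) :
    ∀ v ∈ sphere (0 : EuclideanSpace ℝ (Fin 2)) 1,
      ∃ x : EuclideanSpace ℝ (Fin 2), N x = 1 ∧
        ‖gradient N x‖⁻¹ • gradient N x = v := by
  intro v hv
  have hv1 : ‖v‖ = 1 := by simpa using mem_sphere_zero_iff_norm.mp hv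
  have hvne : v ≠ 0 := by
    intro h; rw [h, norm_zero] at hv1; norm_num at hv1
  -- basic facts about N
  have hN0 : N 0 = 0 := by simpa using hN_smul 0 0
  have hNneg : ∀ x, N (-x) = N x := fun x => by simpa using hN_smul (-1) x
  have hNnonneg : ∀ x, 0 ≤ N x := by
    intro x
    have h := hN_add x (-x)
    rw [add_neg_cancel, hN0, hNneg] at h
    linarith
  have hNpos : ∀ x, x ≠ 0 → 0 < N x := by
    intro x hx
    rcases lt_or_eq_of_le (hNnonneg x) with h | h
    · exact h
    · exact absurd (hN_zero x h.symm) hx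
  -- upper bound : N x ≤ C * ‖x‖
  set e0 : EuclideanSpace ℝ (Fin 2) := EuclideanSpace.single 0 1 with he0
  set e1 : EuclideanSpace ℝ (Fin 2) := EuclideanSpace.single 1 1 with he1
  set C : ℝ := N e0 + N e1 with hCdef
  have hcoord : ∀ (x : EuclideanSpace ℝ (Fin 2)) (i : Fin 2), |x i| ≤ ‖x‖ := by
    intro x i
    have h1 : ⟪EuclideanSpace.single i (1 : ℝ), x⟫ = x i := by
      simp [EuclideanSpace.inner_single_left]
    have h2 := abs_real_inner_le_norm (EuclideanSpace.single i (1 : ℝ)) x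
    rw [h1, EuclideanSpace.norm_single] at h2
    simpa using h2
  have hub : ∀ x, N x ≤ C * ‖x‖ := by
    intro x
    have hdecomp : x = x 0 • e0 + x 1 • e1 := by
      ext i
      fin_cases i <;>
        simp [he0, he1, EuclideanSpace.single_apply]
    calc N x = N (x 0 • e0 + x 1 • e1) := by rw [← hdecomp]
      _ ≤ N (x 0 • e0) + N (x 1 • e1) := hN_add _ _
      _ = |x 0| * N e0 + |x 1| * N e1 := by rw [hN_smul, hN_smul]
      _ ≤ ‖x‖ * N e0 + ‖x‖ * N e1 :=
          add_le_add (mul_le_mul_of_nonneg_right (hcoord x 0) (hNnonneg _))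
            (mul_le_mul_of_nonneg_right (hcoord x 1) (hNnonneg _))
      _ = C * ‖x‖ := by ring
  -- N is Lipschitz hence continuous
  have hCnonneg : 0 ≤ C := le_trans (hNnonneg e0) (le_add_of_nonneg_right (hNnonneg e1))
  have hcont : Continuous N := by
    refine LipschitzWith.continuous (K := ⟨C, hCnonneg⟩) (LipschitzWith.of_dist_le_mul ?_)
    intro x y
    rw [Real.dist_eq, dist_eq_norm]
    have h1 : N x - N y ≤ N (x - y) := by
      have := hN_add (x - y) y; simp only [sub_add_cancel] at this; linarith
    have h2 : N y - N x ≤ N (x - y) := by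
      have := hN_add (y - x) x; simp only [sub_add_cancel] at this
      have h3 : N (y - x) = N (x - y) := by rw [← hNneg (y - x)]; congr 1; abel
      linarith [h3 ▸ this]
    have := hub (x - y)
    rw [abs_sub_le_iff]
    change N x - N y ≤ C * ‖x - y‖ ∧ N y - N x ≤ C * ‖x - y‖
    constructor <;> linarith
  -- lower bound : c * ‖x‖ ≤ N x with c > 0
  obtain ⟨w, hw, hwmin⟩ := (isCompact_sphere (0 : EuclideanSpace ℝ (Fin 2)) 1).exists_isMinOn
    (NormedSpace.sphere_nonempty.mpr zero_le_one) hcont.continuousOn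
  have hwne : w ≠ 0 := by
    intro h
    have := mem_sphere_zero_iff_norm.mp hw
    rw [h, norm_zero] at this; norm_num at this
  set c : ℝ := N w with hcdef
  have hcpos : 0 < c := hNpos w hwne
  have hlb : ∀ x, c * ‖x‖ ≤ N x := by
    intro x
    rcases eq_or_ne x 0 with rfl | hx
    · simp [hN0]
    · have hxnorm : 0 < ‖x‖ := norm_pos_iff.mpr hx
      set u : EuclideanSpace ℝ (Fin 2) := ‖x‖⁻¹ • x with hu
      have hunorm : ‖u‖ = 1 := by
        rw [hu, norm_smul, norm_inv, norm_norm, inv_mul_cancel₀ hxnorm.ne']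
      have humem : u ∈ sphere (0 : EuclideanSpace ℝ (Fin 2)) 1 :=
        mem_sphere_zero_iff_norm.mpr hunorm
      have hcu : c ≤ N u := hwmin humem
      have hxu : x = ‖x‖ • u := by rw [hu, smul_inv_smul₀ hxnorm.ne']
      calc c * ‖x‖ ≤ N u * ‖x‖ := by gcongr
        _ = ‖x‖ * N u := by ring
        _ = |‖x‖| * N u := by rw [abs_of_pos hxnorm]
        _ = N (‖x‖ • u) := (hN_smul _ _).symm
        _ = N x := by rw [← hxu]
  -- the unit sphere of N is compact and nonempty
  set S : Set (EuclideanSpace ℝ (Fin 2)) := {x | N x = 1} with hSdef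
  have hSclosed : IsClosed S := isClosed_eq hcont continuous_const
  have hSsub : S ⊆ closedBall 0 c⁻¹ := by
    intro x hx
    rw [mem_closedBall, dist_zero_right]
    have := hlb x
    rw [hx] at this
    rw [← one_div, le_div_iff₀ hcpos]
    linarith
  have hScompact : IsCompact S :=
    (isCompact_closedBall (0 : EuclideanSpace ℝ (Fin 2)) c⁻¹).of_isClosed_subset hSclosed hSsub
  have hNv : 0 < N v := hNpos v hvne
  set x₁ : EuclideanSpace ℝ (Fin 2) := (N v)⁻¹ • v with hx₁def
  have hx₁ : x₁ ∈ S := by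
    show N x₁ = 1
    rw [hx₁def, hN_smul, abs_of_pos (inv_pos.mpr hNv), inv_mul_cancel₀ hNv.ne']
  -- maximize ⟪v, ·⟫ on S
  have hφcont : Continuous fun x : EuclideanSpace ℝ (Fin 2) => ⟪v, x⟫ :=
    (innerSL ℝ v).continuous
  obtain ⟨x₀, hx₀S, hmax⟩ := hScompact.exists_isMaxOn ⟨x₁, hx₁⟩ hφcont.continuousOn
  have hx₀1 : N x₀ = 1 := hx₀S
  have hx₀ne : x₀ ≠ 0 := by
    intro h; rw [h, hN0] at hx₀1; norm_num at hx₀1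
  -- N is strictly differentiable at x₀
  have hmem : ({0}ᶜ : Set (EuclideanSpace ℝ (Fin 2))) ∈ nhds x₀ :=
    isOpen_compl_singleton.mem_nhds (by simpa using hx₀ne)
  have hL : HasStrictFDerivAt N (fderiv ℝ N x₀) x₀ :=
    (hN_C1.contDiffAt hmem).hasStrictFDerivAt one_ne_zero
  set L : EuclideanSpace ℝ (Fin 2) →L[ℝ] ℝ := fderiv ℝ N x₀ with hLdef
  -- Euler identity : L x₀ = N x₀ = 1
  have hEuler : L x₀ = 1 := by
    have hs : HasDerivAt (fun t : ℝ => t • x₀) x₀ 1 := by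
      simpa using (hasDerivAt_id (1 : ℝ)).smul_const x₀
    have hf : HasFDerivAt N L ((1 : ℝ) • x₀) := by rw [one_smul]; exact hL.hasFDerivAt
    have hd1 : HasDerivAt (fun t : ℝ => N (t • x₀)) (L x₀) 1 := by
      have := hf.comp_hasDerivAt 1 hs
      exact this
    have hmm : HasDerivAt (fun t : ℝ => t * N x₀) (N x₀) 1 := by
      simpa using (hasDerivAt_id (1 : ℝ)).mul_const (N x₀)
    have hEq : (fun t : ℝ => N (t • x₀)) =ᶠ[nhds (1 : ℝ)] fun t : ℝ => t * N x₀ := by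
      filter_upwards [eventually_gt_nhds zero_lt_one] with t ht
      rw [hN_smul, abs_of_pos ht]
    have hd2 : HasDerivAt (fun t : ℝ => N (t • x₀)) (N x₀) 1 :=
      hmm.congr_of_eventuallyEq hEq
    rw [← hx₀1]
    exact hd1.unique hd2
  -- Lagrange multipliers
  have hφ' : HasStrictFDerivAt (fun x : EuclideanSpace ℝ (Fin 2) => ⟪v, x⟫)
      (innerSL ℝ v) x₀ := (innerSL ℝ v).hasStrictFDerivAt
  have hextr : IsLocalExtrOn (fun x : EuclideanSpace ℝ (Fin 2) => ⟪v, x⟫)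
      {x | N x = N x₀} x₀ := by
    have : {x : EuclideanSpace ℝ (Fin 2) | N x = N x₀} = S := by
      rw [hSdef, hx₀1]
    rw [this]
    exact Or.inr hmax.localize
  obtain ⟨Λ, Λ₀, hne0, hmul⟩ := hextr.exists_linear_map_of_hasStrictFDerivAt hL hφ'
  set a : ℝ := Λ 1 with hadef
  have hΛr : ∀ r : ℝ, Λ r = r * a := by
    intro r
    rw [hadef, ← smul_eq_mul, ← Λ.map_smul, smul_eq_mul, mul_one]
  have hmul' : ∀ x, a * L x + Λ₀ * ⟪v, x⟫ = 0 := by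
    intro x
    have := hmul x
    rw [hΛr (L x), smul_eq_mul] at this
    simp only [innerSL_apply_apply] at this
    linarith [mul_comm (L x) a ▸ this]
  set μ : ℝ := ⟪v, x₀⟫ with hμdef
  have hμpos : 0 < μ := by
    have h1 : ⟪v, x₁⟫ ≤ μ := hmax hx₁
    have h2 : ⟪v, x₁⟫ = (N v)⁻¹ := by
      rw [hx₁def, real_inner_smul_right, real_inner_self_eq_norm_sq, hv1]
      ring
    rw [h2] at h1
    exact lt_of_lt_of_le (inv_pos.mpr hNv) h1
  -- Λ₀ ≠ 0
  have ha : a + Λ₀ * μ = 0 := by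
    have := hmul' x₀
    rw [hEuler] at this
    linarith
  have hΛ₀ne : Λ₀ ≠ 0 := by
    intro h
    rw [h] at ha
    have haz : a = 0 := by linarith
    apply hne0
    have hΛz : Λ = 0 := by
      apply LinearMap.ext_ring
      simp [← hadef, haz]
    rw [hΛz, h]; rfl
  -- conclude L = μ⁻¹ • ⟪v, ·⟫
  have hLx : ∀ x, L x = μ⁻¹ * ⟪v, x⟫ := by
    intro x
    have h1 := hmul' x
    have h2 : a = -(Λ₀ * μ) := by linarith
    rw [h2] at h1
    have h3 : Λ₀ * (μ * L x - ⟪v, x⟫) = 0 := by linear_combination -h1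
    have h4 : μ * L x - ⟪v, x⟫ = 0 := by
      rcases mul_eq_zero.mp h3 with h | h
      · exact absurd h hΛ₀ne
      · exact h
    rw [eq_comm, inv_mul_eq_div, div_eq_iff hμpos.ne']
    linear_combination -h4
  -- gradient N x₀ = μ⁻¹ • v
  have hgrad : HasGradientAt N (μ⁻¹ • v) x₀ := by
    rw [hasGradientAt_iff_hasFDerivAt]
    have hLeq : (InnerProductSpace.toDual ℝ (EuclideanSpace ℝ (Fin 2))) (μ⁻¹ • v) = L := by
      ext y
      rw [InnerProductSpace.toDual_apply_apply, real_inner_smul_left, hLx y]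
    rw [hLeq]
    exact hL.hasFDerivAt
  have hgradeq : gradient N x₀ = μ⁻¹ • v := hgrad.gradient
  refine ⟨x₀, hx₀1, ?_⟩
  rw [hgradeq, norm_smul, hv1, norm_inv, Real.norm_eq_abs, abs_of_pos hμpos, mul_one,
    inv_inv, smul_smul, mul_inv_cancel₀ hμpos.ne', one_smul]
end
end

section
/- Let N be a norm on ℝ² whose restriction to ℝ² \ {0} is of class C¹. Then N is strictly convex (i.e., the closed unit ball B_N(0,1) is a strictly convex set) if and only if the Gauss map G : ∂B_N(0,1) → S¹ is injective. -/
open Set Metric InnerProductSpace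
open scoped RealInnerProductSpace

noncomputable section

local notation "E" => EuclideanSpace ℝ (Fin 2)

section Aux

variable {N : E → ℝ}

lemma myN_zero (hN_smul : ∀ (c : ℝ) (x : E), N (c • x) = |c| * N x) : N 0 = 0 := by
  simpa using hN_smul 0 0

lemma myN_nonneg (hN_add : ∀ x y : E, N (x + y) ≤ N x + N y)
    (hN_smul : ∀ (c : ℝ) (x : E), N (c • x) = |c| * N x) (x : E) : 0 ≤ N x := by
  have h1 : N (-x) = N x := by simpa using hN_smul (-1) x
  have h2 := hN_add x (-x)
  rw [add_neg_cancel, myN_zero hN_smul, h1] at h2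
  linarith

lemma myN_pos (hN_add : ∀ x y : E, N (x + y) ≤ N x + N y)
    (hN_smul : ∀ (c : ℝ) (x : E), N (c • x) = |c| * N x)
    (hN_zero : ∀ x : E, N x = 0 → x = 0) {x : E} (hx : x ≠ 0) : 0 < N x :=
  lt_of_le_of_ne (myN_nonneg hN_add hN_smul x) (fun h => hx (hN_zero x h.symm))

/-- differentiability away from zero -/
lemma myDiff (hN_C1 : ContDiffOn ℝ 1 N ({0}ᶜ : Set E)) {x : E} (hx : x ≠ 0) :
    HasGradientAt N (gradient N x) x := by
  have : DifferentiableAt ℝ N x :=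
    (hN_C1.differentiableOn one_ne_zero).differentiableAt
      (isOpen_compl_singleton.mem_nhds (by simpa using hx))
  exact this.hasGradientAt

/-- directional derivative along `z` at `x`. -/
lemma myDeriv_line (hN_C1 : ContDiffOn ℝ 1 N ({0}ᶜ : Set E)) {x : E} (hx : x ≠ 0) (z : E) :
    HasDerivAt (fun t : ℝ => N (x + t • z)) ⟪gradient N x, z⟫ 0 := by
  have hg := (myDiff hN_C1 hx).hasFDerivAt
  have hline : HasDerivAt (fun t : ℝ => x + t • z) z 0 := by
    simpa using ((hasDerivAt_id (0:ℝ)).smul_const z).const_add x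
  have hg' : HasFDerivAt N ((toDual ℝ E) (gradient N x)) (x + (0:ℝ) • z) := by
    simpa using hg
  have := hg'.comp_hasDerivAt 0 hline
  simpa [toDual_apply_apply, Function.comp_def] using this

lemma slope_le (hN_add : ∀ x y : E, N (x + y) ≤ N x + N y)
    (hN_smul : ∀ (c : ℝ) (x : E), N (c • x) = |c| * N x)
    (hN_C1 : ContDiffOn ℝ 1 N ({0}ᶜ : Set E)) {x : E} (hx : x ≠ 0) (z : E) :
    ⟪gradient N x, z⟫ ≤ N z := by
  have hd := myDeriv_line hN_C1 hx z
  have hslope : Filter.Tendsto (slope (fun t : ℝ => N (x + t • z)) 0) (nhdsWithin 0 (Set.Ioi 0))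
      (nhds ⟪gradient N x, z⟫) := by
    have := hasDerivAt_iff_tendsto_slope.mp hd
    exact this.mono_left (nhdsWithin_mono _ (fun t ht => ne_of_gt ht))
  refine le_of_tendsto hslope ?_
  filter_upwards [self_mem_nhdsWithin] with t (ht : 0 < t)
  have hb : N (x + t • z) ≤ N x + t * N z := by
    have := hN_add x (t • z)
    rw [hN_smul t z, abs_of_pos ht] at this
    exact this
  rw [slope_def_field]
  simp only [zero_smul, add_zero, sub_zero]
  rw [div_le_iff₀ ht]
  linarith [mul_comm t (N z) ▸ hb]

lemma euler (hN_smul : ∀ (c : ℝ) (x : E), N (c • x) = |c| * N x)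
    (hN_C1 : ContDiffOn ℝ 1 N ({0}ᶜ : Set E)) {x : E} (hx : x ≠ 0) :
    ⟪gradient N x, x⟫ = N x := by
  have hd := myDeriv_line hN_C1 hx x
  have heq : (fun t : ℝ => N (x + t • x)) =ᶠ[nhds (0:ℝ)] (fun t => (1 + t) * N x) := by
    filter_upwards [Ioo_mem_nhds (by norm_num : (-1:ℝ) < 0) (by norm_num : (0:ℝ) < 1)] with t ht
    have : x + t • x = (1 + t) • x := by rw [add_smul, one_smul]
    rw [this, hN_smul, abs_of_pos (by linarith [ht.1])]
  have hd2 : HasDerivAt (fun t : ℝ => (1 + t) * N x) (N x) 0 := by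
    simpa using ((hasDerivAt_id (0:ℝ)).const_add 1).mul_const (N x)
  exact (hd.congr_of_eventuallyEq heq.symm).unique hd2

/-- a supporting functional at a unit vector is a positive multiple of the gradient. -/
lemma support_eq_gradient (_hN_add : ∀ x y : E, N (x + y) ≤ N x + N y)
    (hN_smul : ∀ (c : ℝ) (x : E), N (c • x) = |c| * N x)
    (_hN_zero : ∀ x : E, N x = 0 → x = 0)
    (hN_C1 : ContDiffOn ℝ 1 N ({0}ᶜ : Set E)) {x u : E} (hx : N x = 1)
    (hu : ∀ z : E, ⟪u, z⟫ ≤ ⟪u, x⟫ * N z) :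
    u = ⟪u, x⟫ • gradient N x := by
  have hx0 : x ≠ 0 := by intro h; rw [h, myN_zero hN_smul] at hx; norm_num at hx
  set c := ⟪u, x⟫ with hc
  -- g z := c * N z - ⟪u, z⟫ has a global min at x
  have hgx : c * N x - ⟪u, x⟫ = 0 := by rw [hx]; ring
  have hmin : IsLocalMin (fun z : E => c * N z - ⟪u, z⟫) x := by
    apply Filter.Eventually.of_forall
    intro z
    have := hu z
    simp only [hgx]
    linarith
  have hgrad := (myDiff hN_C1 hx0).hasFDerivAt
  have hder : HasFDerivAt (fun z : E => c * N z - ⟪u, z⟫)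
      (c • (toDual ℝ E (gradient N x)) - innerSL ℝ u) x := by
    exact (hgrad.const_smul c).sub (innerSL ℝ u).hasFDerivAt
  have hzero := hmin.hasFDerivAt_eq_zero hder
  refine ext_inner_right ℝ (fun z => ?_)
  have := congrArg (fun L : E →L[ℝ] ℝ => L z) hzero
  simp only [ContinuousLinearMap.sub_apply, ContinuousLinearMap.smul_apply, toDual_apply_apply,
    innerSL_apply_apply, ContinuousLinearMap.zero_apply, smul_eq_mul] at this
  rw [real_inner_smul_left]
  linarith

end Aux

/-- for a norm `N` on ℝ² of class `C¹` away from `0`, the unit ball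
`B_N(0,1)` is strictly convex (through every boundary point there is a
supporting line meeting the ball only in that point) if and only if the Gauss
map `G x = ∇N(x)/‖∇N(x)‖` is injective on the `N`-unit sphere. -/
theorem strictly_convex_iff_gauss_map_injective
    (N : EuclideanSpace ℝ (Fin 2) → ℝ)
    (hN_add : ∀ x y : EuclideanSpace ℝ (Fin 2), N (x + y) ≤ N x + N y)
    (hN_smul : ∀ (c : ℝ) (x : EuclideanSpace ℝ (Fin 2)), N (c • x) = |c| * N x)
    (hN_zero : ∀ x : EuclideanSpace ℝ (Fin 2), N x = 0 → x = 0)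
    (hN_C1 : ContDiffOn ℝ 1 N ({0}ᶜ : Set (EuclideanSpace ℝ (Fin 2)))) :
    (∀ x : EuclideanSpace ℝ (Fin 2), N x = 1 →
      ∃ u : EuclideanSpace ℝ (Fin 2), u ≠ 0 ∧
        (∀ y : EuclideanSpace ℝ (Fin 2), N y ≤ 1 → ⟪u, y⟫ ≤ ⟪u, x⟫) ∧
        (∀ y : EuclideanSpace ℝ (Fin 2), N y ≤ 1 → ⟪u, y⟫ = ⟪u, x⟫ → y = x)) ↔
    Set.InjOn (fun x : EuclideanSpace ℝ (Fin 2) => ‖gradient N x‖⁻¹ • gradient N x)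
      {x : EuclideanSpace ℝ (Fin 2) | N x = 1} := by
  have hne : ∀ {x : E}, N x = 1 → x ≠ 0 := by
    intro x hx h
    rw [h, myN_zero hN_smul] at hx; norm_num at hx
  have heuler : ∀ {x : E}, N x = 1 → ⟪gradient N x, x⟫ = 1 := by
    intro x hx
    rw [euler hN_smul hN_C1 (hne hx), hx]
  have hgne : ∀ {x : E}, N x = 1 → gradient N x ≠ 0 := by
    intro x hx h
    have := heuler hx
    rw [h, inner_zero_left] at this; norm_num at this
  have hsupp : ∀ {x u : E}, N x = 1 → (∀ y : E, N y ≤ 1 → ⟪u, y⟫ ≤ ⟪u, x⟫) →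
      ∀ z : E, ⟪u, z⟫ ≤ ⟪u, x⟫ * N z := by
    intro x u hx hu z
    rcases eq_or_ne z 0 with rfl | hz
    · simp [myN_zero hN_smul]
    · have hNz : 0 < N z := myN_pos hN_add hN_smul hN_zero hz
      have h1 : N ((N z)⁻¹ • z) = 1 := by
        rw [hN_smul, abs_of_pos (inv_pos.mpr hNz), inv_mul_cancel₀ hNz.ne']
      have := hu _ h1.le
      rw [real_inner_smul_right] at this
      calc ⟪u, z⟫ = N z * ((N z)⁻¹ * ⟪u, z⟫) := by field_simp
        _ ≤ N z * ⟪u, x⟫ := by exact mul_le_mul_of_nonneg_left this hNz.le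
        _ = ⟪u, x⟫ * N z := mul_comm _ _
  constructor
  · -- strictly convex → Gauss map injective
    intro h x hx y hy hGxy
    simp only [Set.mem_setOf_eq] at hx hy
    have hGxy' : ‖gradient N x‖⁻¹ • gradient N x = ‖gradient N y‖⁻¹ • gradient N y := hGxy
    have hgx : gradient N x ≠ 0 := hgne hx
    have hgy : gradient N y ≠ 0 := hgne hy
    have hgxn : (0:ℝ) < ‖gradient N x‖ := norm_pos_iff.mpr hgx
    have hgyn : (0:ℝ) < ‖gradient N y‖ := norm_pos_iff.mpr hgy
    set r := ‖gradient N y‖ * ‖gradient N x‖⁻¹ with hr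
    have hrpos : 0 < r := mul_pos hgyn (inv_pos.mpr hgxn)
    have hgyr : gradient N y = r • gradient N x := by
      have h1 : gradient N y = ‖gradient N y‖ • (‖gradient N y‖⁻¹ • gradient N y) := by
        rw [smul_smul, mul_inv_cancel₀ hgyn.ne', one_smul]
      rw [h1, ← hGxy', smul_smul]
    have hgyx : ⟪gradient N y, x⟫ = r := by
      rw [hgyr, real_inner_smul_left, heuler hx, mul_one]
    have hr1 : r ≤ 1 := by
      have := slope_le hN_add hN_smul hN_C1 (hne hy) x
      rw [hgyx, hx] at this; exact this
    have hgxy_le : ⟪gradient N x, y⟫ ≤ 1 := by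
      have := slope_le hN_add hN_smul hN_C1 (hne hx) y
      rw [hy] at this; exact this
    have hone : (1:ℝ) = r * ⟪gradient N x, y⟫ := by
      rw [← heuler hy, hgyr, real_inner_smul_left]
    have hgxy : ⟪gradient N x, y⟫ = 1 := by nlinarith
    obtain ⟨u, hu0, hsup, huniq⟩ := h x hx
    have hueq : u = ⟪u, x⟫ • gradient N x :=
      support_eq_gradient hN_add hN_smul hN_zero hN_C1 hx (hsupp hx hsup)
    have : ⟪u, y⟫ = ⟪u, x⟫ := by
      rw [hueq, real_inner_smul_left, real_inner_smul_left, hgxy, heuler hx]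
    exact (huniq y hy.le this).symm ▸ rfl
  · -- Gauss map injective → strictly convex
    intro hinj x hx
    refine ⟨gradient N x, hgne hx, ?_, ?_⟩
    · intro y hy
      have := slope_le hN_add hN_smul hN_C1 (hne hx) y
      rw [heuler hx]
      linarith
    · intro y hy heq
      rw [heuler hx] at heq
      have hy1 : N y = 1 := by
        have := slope_le hN_add hN_smul hN_C1 (hne hx) y
        linarith
      have hsupy : ∀ z : E, ⟪gradient N x, z⟫ ≤ ⟪gradient N x, y⟫ * N z := by
        intro z
        rw [heq, one_mul]
        exact slope_le hN_add hN_smul hN_C1 (hne hx) z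
      have hgeq : gradient N x = gradient N y := by
        have := support_eq_gradient hN_add hN_smul hN_zero hN_C1 hy1 hsupy
        rwa [heq, one_smul] at this
      exact hinj hy1 hx (by simp only [hgeq])
end
end

section
/- Let N be a strictly convex norm on ℝ² whose restriction to ℝ² \ {0} is of class C¹, and assume the Gauss map G : ∂B_N(0,1) → S¹ is bijective. Then for every v ∈ S¹ and every x ∈ ℝ², the closest-point projection of x onto H_v with respect to N is given by P_v(x) = x − G⁻¹(v) · ⟨v, x⟩ / ⟨v, G⁻¹(v)⟩. In particular, for each fixed v the map x ↦ P_v(x) is linear. -/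
open Set Metric
open scoped RealInnerProductSpace Topology
open Filter

noncomputable section

/-- for a strictly convex norm `N` on ℝ², `C¹` away from `0`, with
bijective Gauss map `G`, the closest-point projection onto the line `H_v`
orthogonal to `v ∈ S¹` is given by
`P_v(x) = x − (⟪v,x⟫ / ⟪v, G⁻¹ v⟫) • G⁻¹ v`; in particular `P_v` is linear. -/
theorem closest_point_projection_formula
    (N : EuclideanSpace ℝ (Fin 2) → ℝ)
    (hN_add : ∀ x y : EuclideanSpace ℝ (Fin 2), N (x + y) ≤ N x + N y)
    (hN_smul : ∀ (c : ℝ) (x : EuclideanSpace ℝ (Fin 2)), N (c • x) = |c| * N x)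
    (hN_zero : ∀ x : EuclideanSpace ℝ (Fin 2), N x = 0 → x = 0)
    (hN_strict : StrictConvex ℝ {x : EuclideanSpace ℝ (Fin 2) | N x ≤ 1})
    (hN_C1 : ContDiffOn ℝ 1 N ({0}ᶜ : Set (EuclideanSpace ℝ (Fin 2))))
    -- the Gauss map `G x = ∇N(x)/‖∇N(x)‖` is a bijection from the `N`-unit
    -- sphere onto `S¹`, with inverse `Ginv`:
    (hG_bij : Set.BijOn
      (fun x : EuclideanSpace ℝ (Fin 2) => ‖gradient N x‖⁻¹ • gradient N x)
      {x : EuclideanSpace ℝ (Fin 2) | N x = 1}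
      (sphere (0 : EuclideanSpace ℝ (Fin 2)) 1))
    (Ginv : EuclideanSpace ℝ (Fin 2) → EuclideanSpace ℝ (Fin 2))
    (hGinv : Set.InvOn Ginv
      (fun x : EuclideanSpace ℝ (Fin 2) => ‖gradient N x‖⁻¹ • gradient N x)
      {x : EuclideanSpace ℝ (Fin 2) | N x = 1}
      (sphere (0 : EuclideanSpace ℝ (Fin 2)) 1))
    -- `P v` is the closest-point projection (w.r.t. `N`) onto the line `H_v`:
    (P : EuclideanSpace ℝ (Fin 2) → EuclideanSpace ℝ (Fin 2) → EuclideanSpace ℝ (Fin 2))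
    (hP : ∀ v ∈ sphere (0 : EuclideanSpace ℝ (Fin 2)) 1, ∀ x : EuclideanSpace ℝ (Fin 2),
      ⟪v, P v x⟫ = 0 ∧
        ∀ q : EuclideanSpace ℝ (Fin 2), ⟪v, q⟫ = 0 → N (x - P v x) ≤ N (x - q)) :
    ∀ v ∈ sphere (0 : EuclideanSpace ℝ (Fin 2)) 1,
      (∀ x : EuclideanSpace ℝ (Fin 2),
        P v x = x - (⟪v, x⟫ / ⟪v, Ginv v⟫) • Ginv v) ∧
      IsLinearMap ℝ (P v) := by
  -- basic facts about N
  have hN0 : N 0 = 0 := by simpa using hN_smul 0 0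
  have hNneg : ∀ w, N (-w) = N w := by
    intro w
    have := hN_smul (-1) w
    simpa using this
  have hNpos : ∀ w, 0 ≤ N w := by
    intro w
    have h := hN_add w (-w)
    rw [add_neg_cancel, hN0, hNneg] at h
    linarith
  have hNconv : ConvexOn ℝ univ N := by
    refine ⟨convex_univ, ?_⟩
    intro x _ y _ a b ha hb hab
    calc N (a • x + b • y) ≤ N (a • x) + N (b • y) := hN_add _ _
      _ = a * N x + b * N y := by
          rw [hN_smul, hN_smul, abs_of_nonneg ha, abs_of_nonneg hb]
  -- interior of the unit ball is where N < 1
  have hint : ∀ z, z ∈ interior {x : EuclideanSpace ℝ (Fin 2) | N x ≤ 1} → N z < 1 := by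
    intro z hz
    have hco : ContinuousAt (fun s : ℝ => s • z) 1 :=
      (continuous_id.smul continuous_const).continuousAt
    have h1 : ∀ᶠ s in 𝓝 (1 : ℝ), s • z ∈ interior {x : EuclideanSpace ℝ (Fin 2) | N x ≤ 1} := by
      apply hco.eventually_mem (isOpen_interior.mem_nhds ?_)
      simpa using hz
    have h2 : ∀ᶠ s in 𝓝[>] (1 : ℝ),
        s • z ∈ interior {x : EuclideanSpace ℝ (Fin 2) | N x ≤ 1} :=
      eventually_nhdsWithin_of_eventually_nhds h1
    obtain ⟨s, hsmem, hs1⟩ := (h2.and eventually_mem_nhdsWithin).exists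
    have hs1' : (1:ℝ) < s := hs1
    have hle : N (s • z) ≤ 1 := by
      have := interior_subset hsmem; simpa using this
    rw [hN_smul, abs_of_pos (lt_trans one_pos hs1')] at hle
    have := hNpos z
    nlinarith
  intro v hv
  -- set up u = Ginv v
  set u := Ginv v with hu_def
  have hu1 : N u = 1 := by
    obtain ⟨x0, hx0, hGx0⟩ := hG_bij.surjOn hv
    have : u = x0 := by rw [hu_def, ← hGx0]; exact hGinv.1 hx0
    rw [this]; exact hx0
  have hune0 : u ≠ 0 := by
    intro h; rw [h, hN0] at hu1; norm_num at hu1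
  have hdiff : DifferentiableAt ℝ N u :=
    (hN_C1.differentiableOn one_ne_zero).differentiableAt
      (isOpen_compl_singleton.mem_nhds hune0)
  set g := gradient N u with hg_def
  have hfd : HasFDerivAt N (InnerProductSpace.toDual ℝ _ g) u :=
    hdiff.hasGradientAt.hasFDerivAt
  -- Euler's identity: ⟪g, u⟫ = 1
  have hEuler : ⟪g, u⟫ = 1 := by
    have hcurve : HasDerivAt (fun t : ℝ => t • u) u 1 := by
      simpa using (hasDerivAt_id (1 : ℝ)).smul_const u
    have hc : HasDerivAt (fun t : ℝ => N (t • u)) (⟪g, u⟫) 1 := by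
      have hfd1 : HasFDerivAt N (InnerProductSpace.toDual ℝ _ g) ((1:ℝ) • u) := by
        rwa [one_smul]
      have := hfd1.comp_hasDerivAt 1 hcurve
      simp only [InnerProductSpace.toDual_apply_apply] at this; exact this
    have heq : (fun t : ℝ => N (t • u)) =ᶠ[𝓝 (1 : ℝ)] id := by
      filter_upwards [Ioi_mem_nhds (show (0:ℝ) < 1 from one_pos)] with t ht
      simp [hN_smul, abs_of_pos (show (0:ℝ) < t from ht), hu1]
    have hid : HasDerivAt (id : ℝ → ℝ) (⟪g, u⟫) 1 := hc.congr_of_eventuallyEq heq.symm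
    have := hid.unique (hasDerivAt_id 1)
    linarith [this]
  -- supporting hyperplane : ⟪g, y⟫ ≤ N y  for N y ≤ 1
  have hsupp : ∀ y, N y ≤ 1 → ⟪g, y⟫ ≤ 1 := by
    intro y hy
    set φ : ℝ → ℝ := N ∘ (AffineMap.lineMap u y) with hφ
    have hφconv : ConvexOn ℝ univ φ := by
      have := hNconv.comp_affineMap (AffineMap.lineMap u y)
      simpa [hφ] using this
    have hφd : HasDerivAt φ (⟪g, y - u⟫) 0 := by
      have hcurve : HasDerivAt (fun t : ℝ => t • (y - u) + u) (y - u) 0 := by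
        simpa using ((hasDerivAt_id (0 : ℝ)).smul_const (y - u)).add_const u
      have hfd0 : HasFDerivAt N (InnerProductSpace.toDual ℝ _ g) ((0:ℝ) • (y - u) + u) := by
        rwa [zero_smul, zero_add]
      have := hfd0.comp_hasDerivAt 0 hcurve
      have h2 : HasDerivAt (fun t : ℝ => N (t • (y - u) + u)) (⟪g, y - u⟫) 0 := by
        simp only [InnerProductSpace.toDual_apply_apply] at this; exact this
      have : φ = fun t : ℝ => N (t • (y - u) + u) := by
        funext t; simp [hφ, AffineMap.lineMap_apply]
      rw [this]; exact h2
    have hslope := hφconv.le_slope_of_hasDerivAt (mem_univ (0:ℝ)) (mem_univ 1)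
      one_pos hφd
    have hs : slope φ 0 1 = N y - 1 := by
      simp [slope, hφ, AffineMap.lineMap_apply, hu1]
    rw [hs] at hslope
    have hsub : ⟪g, y - u⟫ = ⟪g, y⟫ - ⟪g, u⟫ := inner_sub_right g y u
    rw [hsub, hEuler] at hslope
    linarith
  -- v = ‖g‖⁻¹ • g
  have hGu : ‖g‖⁻¹ • g = v := by
    have := hGinv.2 hv
    simpa [hg_def, hu_def] using this
  have hgne : g ≠ 0 := by
    intro h; rw [h] at hEuler; simp at hEuler
  have hvu : ⟪v, u⟫ = ‖g‖⁻¹ := by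
    rw [← hGu, real_inner_smul_left, hEuler, mul_one]
  have hd_pos : 0 < ⟪v, u⟫ := by
    rw [hvu]; exact inv_pos.mpr (norm_pos_iff.mpr hgne)
  set d := ⟪v, u⟫ with hd_def
  -- key inequality
  have key1 : ∀ w, ⟪v, w⟫ ≤ d * N w := by
    intro w
    rcases eq_or_ne (N w) 0 with h0 | h0
    · rw [hN_zero w h0, hN0]; simp
    · have hw : 0 < N w := lt_of_le_of_ne (hNpos w) (Ne.symm h0)
      set y := (N w)⁻¹ • w with hy
      have hNy : N y = 1 := by
        rw [hy, hN_smul, abs_of_pos (inv_pos.mpr hw), inv_mul_cancel₀ h0]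
      have h1 : ⟪g, y⟫ ≤ 1 := hsupp y (le_of_eq hNy)
      have h2 : ⟪v, y⟫ ≤ d := by
        rw [← hGu, real_inner_smul_left, hvu]
        have : (0:ℝ) ≤ ‖g‖⁻¹ := inv_nonneg.mpr (norm_nonneg g)
        nlinarith
      have h3 : ⟪v, y⟫ = (N w)⁻¹ * ⟪v, w⟫ := by
        rw [hy, real_inner_smul_right]
      rw [h3] at h2
      calc ⟪v, w⟫ = N w * ((N w)⁻¹ * ⟪v, w⟫) := by field_simp
        _ ≤ N w * d := by nlinarith
        _ = d * N w := mul_comm _ _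
  have key : ∀ w, |⟪v, w⟫| ≤ d * N w := by
    intro w
    rw [abs_le]
    constructor
    · have := key1 (-w)
      rw [inner_neg_right, hNneg] at this
      linarith
    · exact key1 w
  -- the candidate projection
  have hq0inner : ∀ x : EuclideanSpace ℝ (Fin 2),
      ⟪v, x - (⟪v, x⟫ / d) • u⟫ = 0 := by
    intro x
    rw [inner_sub_right, real_inner_smul_right, ← hd_def,
      div_mul_cancel₀ _ (ne_of_gt hd_pos), sub_self]
  have hq0min : ∀ x q : EuclideanSpace ℝ (Fin 2), ⟪v, q⟫ = 0 →
      N (x - (x - (⟪v, x⟫ / d) • u)) ≤ N (x - q) := by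
    intro x q hq
    rw [sub_sub_cancel, hN_smul, hu1, mul_one]
    have h2 := key (x - q)
    rw [inner_sub_right, hq, sub_zero] at h2
    rw [abs_div, abs_of_pos hd_pos, div_le_iff₀ hd_pos]
    linarith [h2]
  have hformula : ∀ x : EuclideanSpace ℝ (Fin 2),
      P v x = x - (⟪v, x⟫ / d) • u := by
    intro x
    set q₀ := x - (⟪v, x⟫ / d) • u with hq₀
    set p := P v x with hp_def
    obtain ⟨hp1, hp2⟩ := hP v hv x
    have hle1 : N (x - p) ≤ N (x - q₀) := hp2 q₀ (hq0inner x)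
    have hle2 : N (x - q₀) ≤ N (x - p) := hq0min x p hp1
    have heqm : N (x - p) = N (x - q₀) := le_antisymm hle1 hle2
    set m := N (x - p) with hm_def
    by_contra hne
    have hxpne : x - p ≠ x - q₀ := fun h => hne (by
      have := sub_right_injective h; rw [← this])
    rcases eq_or_lt_of_le (hNpos (x - p)) with hm0 | hmpos
    · -- m = 0 : both equal x
      have h1 : x - p = 0 := hN_zero _ hm0.symm
      have h2 : x - q₀ = 0 := hN_zero _ (by rw [← heqm, hm_def, ← hm0])
      exact hxpne (by rw [h1, h2])
    · set a := m⁻¹ • (x - p) with ha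
      set b := m⁻¹ • (x - q₀) with hb
      have hmne : m ≠ 0 := ne_of_gt hmpos
      have hNa : N a = 1 := by
        rw [ha, hN_smul, abs_of_pos (inv_pos.mpr hmpos), ← hm_def,
          inv_mul_cancel₀ hmne]
      have hNb : N b = 1 := by
        rw [hb, hN_smul, abs_of_pos (inv_pos.mpr hmpos), ← heqm,
          inv_mul_cancel₀ hmne]
      have habne : a ≠ b := by
        intro h
        exact hxpne (smul_right_injective _ (inv_ne_zero hmne) h)
      have hmid := hN_strict (le_of_eq hNa) (le_of_eq hNb) habne
        (one_half_pos) (one_half_pos) (by norm_num)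
      have hlt : N ((1/2 : ℝ) • a + (1/2 : ℝ) • b) < 1 := hint _ hmid
      set q₁ := (1/2 : ℝ) • p + (1/2 : ℝ) • q₀ with hq₁
      have hxq₁ : x - q₁ = m • ((1/2 : ℝ) • a + (1/2 : ℝ) • b) := by
        rw [ha, hb, hq₁]
        match_scalars <;> field_simp <;> ring
      have hNq₁ : N (x - q₁) < m := by
        rw [hxq₁, hN_smul, abs_of_pos hmpos]
        have := mul_lt_mul_of_pos_left hlt hmpos
        simpa using this
      have hq₁inner : ⟪v, q₁⟫ = 0 := by
        rw [hq₁, inner_add_right, real_inner_smul_right, real_inner_smul_right,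
          hp1, hq0inner x]
        ring
      have := hp2 q₁ hq₁inner
      linarith
  constructor
  · exact hformula
  · constructor
    · intro x y
      rw [hformula, hformula, hformula, inner_add_right]
      rw [add_div, add_smul]
      abel
    · intro c x
      rw [hformula, hformula, real_inner_smul_right]
      rw [mul_div_assoc, mul_smul]
      module
end
end

section
/- Let N be a strictly convex norm on ℝ² whose restriction to ℝ² \ {0} is of class C¹, with bijective Gauss map G : ∂B_N(0,1) → S¹. For a point x ∈ ℝ² \ {0} and a direction v ∈ S¹, one has P_v(x) = 0 if and only if x is collinear to G⁻¹(v). Consequently, for every x ∈ ℝ² \ {0} there is a direction v₀ ∈ S¹ with P_{v₀}(x) = 0, and the only other direction v ∈ S¹ with P_v(x) = 0 is v = −v₀. -/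
open Set Metric
open scoped RealInnerProductSpace

noncomputable section

abbrev EE := EuclideanSpace ℝ (Fin 2)

lemma nonnegN (N : EE → ℝ) (hN_add : ∀ x y : EE, N (x + y) ≤ N x + N y)
    (hN_smul : ∀ (c : ℝ) (x : EE), N (c • x) = |c| * N x) (x : EE) : 0 ≤ N x := by
  have h0 : N 0 = 0 := by simpa using hN_smul 0 0
  have h1 : N (-x) = N x := by simpa using hN_smul (-1) x
  have := hN_add x (-x); simp [h0, h1] at this; linarith

lemma diffAt (N : EE → ℝ) (hN_C1 : ContDiffOn ℝ 1 N ({0}ᶜ : Set EE)) {x : EE} (hx : x ≠ 0) :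
    DifferentiableAt ℝ N x :=
  (hN_C1.contDiffAt (isOpen_compl_singleton.mem_nhds hx)).differentiableAt one_ne_zero

lemma inner_grad_eq (N : EE → ℝ) (hN_C1 : ContDiffOn ℝ 1 N ({0}ᶜ : Set EE)) {x : EE}
    (hx : x ≠ 0) (w : EE) : ⟪gradient N x, w⟫ = fderiv ℝ N x w := by
  have h := (diffAt N hN_C1 hx).hasGradientAt
  have h2 : HasFDerivAt N (InnerProductSpace.toDual ℝ EE (gradient N x)) x :=
    hasGradientAt_iff_hasFDerivAt.mp h
  rw [h2.fderiv, InnerProductSpace.toDual_apply_apply]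

lemma grad_homog (N : EE → ℝ)
    (hN_smul : ∀ (c : ℝ) (x : EE), N (c • x) = |c| * N x)
    (hN_C1 : ContDiffOn ℝ 1 N ({0}ᶜ : Set EE)) {x : EE} (hx : x ≠ 0) {c : ℝ} (hc : c ≠ 0) :
    gradient N (c • x) = (|c| / c) • gradient N x := by
  have hcx : c • x ≠ 0 := smul_ne_zero hc hx
  have hdx := diffAt N hN_C1 hx
  have hdcx := diffAt N hN_C1 hcx
  have hsmul : HasFDerivAt (fun y : EE => c • y) (c • ContinuousLinearMap.id ℝ EE) x := by
    have := (c • ContinuousLinearMap.id ℝ EE).hasFDerivAt (x := x)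
    simpa [Pi.smul_def] using this
  have h1 : HasFDerivAt (fun y : EE => N (c • y))
      ((fderiv ℝ N (c • x)).comp (c • ContinuousLinearMap.id ℝ EE)) x :=
    (hdcx.hasFDerivAt).comp x hsmul
  have h2 : (fun y : EE => N (c • y)) = fun y : EE => |c| * N y := by
    funext y; rw [hN_smul]
  rw [h2] at h1
  have h3 : HasFDerivAt (fun y : EE => |c| * N y) (|c| • fderiv ℝ N x) x :=
    hdx.hasFDerivAt.const_mul |c|
  have h4 := h1.unique h3
  have key : fderiv ℝ N (c • x) = (|c| / c) • fderiv ℝ N x := by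
    ext w
    have := congrArg (fun L : EE →L[ℝ] ℝ => L w) h4
    simp only [ContinuousLinearMap.comp_apply, ContinuousLinearMap.smul_apply,
      ContinuousLinearMap.id_apply, map_smul, smul_eq_mul] at this ⊢
    field_simp
    linarith [this]
  unfold gradient
  rw [key, map_smul]

lemma convex1d (N : EE → ℝ) (hN_add : ∀ x y : EE, N (x + y) ≤ N x + N y)
    (hN_smul : ∀ (c : ℝ) (x : EE), N (c • x) = |c| * N x) (a b : EE) :
    ConvexOn ℝ univ (fun t : ℝ => N (a + t • b)) := by
  refine ⟨convex_univ, fun s _ t _ p q hp hq hpq => ?_⟩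
  simp only [smul_eq_mul]
  have h1 : a + (p * s + q * t) • b = p • (a + s • b) + q • (a + t • b) := by
    match_scalars
    · linarith
    · ring
  rw [h1]
  calc N (p • (a + s • b) + q • (a + t • b))
      ≤ N (p • (a + s • b)) + N (q • (a + t • b)) := hN_add _ _
    _ = p * N (a + s • b) + q * N (a + t • b) := by
        rw [hN_smul, hN_smul, abs_of_nonneg hp, abs_of_nonneg hq]

lemma deriv1d (N : EE → ℝ) (hN_C1 : ContDiffOn ℝ 1 N ({0}ᶜ : Set EE)) {x : EE} (hx : x ≠ 0)
    (b : EE) : HasDerivAt (fun t : ℝ => N (x + t • b)) ⟪gradient N x, b⟫ 0 := by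
  have hin : HasDerivAt (fun t : ℝ => x + t • b) b 0 := by
    simpa using ((hasDerivAt_id (0:ℝ)).smul_const b).const_add x
  have hfd := (diffAt N hN_C1 hx).hasFDerivAt
  have hfd' : HasFDerivAt N (fderiv ℝ N x) (x + (0:ℝ) • b) := by simpa using hfd
  have := hfd'.comp_hasDerivAt (x := (0:ℝ)) hin
  rw [inner_grad_eq N hN_C1 hx b]
  exact this

lemma subgrad (N : EE → ℝ) (hN_add : ∀ x y : EE, N (x + y) ≤ N x + N y)
    (hN_smul : ∀ (c : ℝ) (x : EE), N (c • x) = |c| * N x)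
    (hN_C1 : ContDiffOn ℝ 1 N ({0}ᶜ : Set EE)) {x : EE} (hx : x ≠ 0) (y : EE) :
    N x + ⟪gradient N x, y - x⟫ ≤ N y := by
  have hconv := convex1d N hN_add hN_smul x (y - x)
  have hder := deriv1d N hN_C1 hx (y - x)
  have := hconv.le_slope_of_hasDerivAt (mem_univ (0:ℝ)) (mem_univ (1:ℝ)) one_pos hder
  rw [slope_def_field] at this
  simp only [zero_smul, add_zero, one_smul] at this
  have h01 : x + (y - x) = y := by abel
  rw [h01] at this
  have : ⟪gradient N x, y - x⟫ ≤ (N y - N x) / (1 - 0) := this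
  simp at this
  linarith

lemma grad_perp (N : EE → ℝ) (hN_C1 : ContDiffOn ℝ 1 N ({0}ᶜ : Set EE)) {x : EE} (hx : x ≠ 0)
    {q : EE} (hmin : ∀ t : ℝ, N x ≤ N (x + t • q)) : ⟪gradient N x, q⟫ = 0 := by
  have hder := deriv1d N hN_C1 hx q
  have hloc : IsLocalMin (fun t : ℝ => N (x + t • q)) 0 := by
    apply Filter.Eventually.of_forall
    intro t
    simpa using hmin t
  exact hloc.hasDerivAt_eq_zero hder

lemma span2 {v z : EE} (hv : ‖v‖ = 1) (h : ∀ q : EE, ⟪v, q⟫ = 0 → ⟪z, q⟫ = 0) :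
    z = ⟪v, z⟫ • v := by
  set w : EE := (WithLp.equiv 2 (Fin 2 → ℝ)).symm ![-(v 1), v 0] with hw
  have hw0 : w 0 = -(v 1) := rfl
  have hw1 : w 1 = v 0 := rfl
  have hvnorm : v 0 * v 0 + v 1 * v 1 = 1 := by
    have := hv
    rw [EuclideanSpace.norm_eq] at this
    have h2 : v 0 ^ 2 + v 1 ^ 2 = 1 := by
      have := congrArg (· ^ 2) this
      simpa [Fin.sum_univ_two, Real.sq_sqrt, add_nonneg, sq_nonneg] using this
    nlinarith [h2]
  have hvw : ⟪v, w⟫ = 0 := by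
    simp [PiLp.inner_apply, RCLike.inner_apply, Fin.sum_univ_two, hw0, hw1]
    ring
  have hzw : ⟪z, w⟫ = 0 := h w hvw
  rw [PiLp.inner_apply] at hzw
  simp [RCLike.inner_apply, Fin.sum_univ_two, hw0, hw1] at hzw
  have hinner : ⟪v, z⟫ = v 0 * z 0 + v 1 * z 1 := by
    simp [PiLp.inner_apply, RCLike.inner_apply, Fin.sum_univ_two]
    ring
  ext i
  fin_cases i
  · show z 0 = (⟪v, z⟫ • v) 0
    rw [PiLp.smul_apply, hinner, smul_eq_mul]
    linear_combination (-(z 0)) * hvnorm + (-(v 1)) * hzw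
  · show z 1 = (⟪v, z⟫ • v) 1
    rw [PiLp.smul_apply, hinner, smul_eq_mul]
    linear_combination (-(z 1)) * hvnorm + (v 0) * hzw

lemma interior_lt (N : EE → ℝ)
    (hN_add : ∀ x y : EE, N (x + y) ≤ N x + N y)
    (hN_smul : ∀ (c : ℝ) (x : EE), N (c • x) = |c| * N x)
    {z : EE} (hz : z ∈ interior {x : EE | N x ≤ 1}) : N z < 1 := by
  rw [mem_interior_iff_mem_nhds, Metric.mem_nhds_iff] at hz
  obtain ⟨ε, hε, hball⟩ := hz
  set δ : ℝ := ε / (2 * (‖z‖ + 1)) with hδdef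
  have hzpos : (0:ℝ) < ‖z‖ + 1 := by positivity
  have hδ : 0 < δ := by positivity
  have hmem : (1 + δ) • z ∈ ball z ε := by
    rw [mem_ball, dist_eq_norm]
    have : (1 + δ) • z - z = δ • z := by module
    rw [this, norm_smul, Real.norm_eq_abs, abs_of_pos hδ]
    calc δ * ‖z‖ ≤ δ * (‖z‖ + 1) := by nlinarith [norm_nonneg z]
      _ = ε / 2 := by rw [hδdef]; field_simp
      _ < ε := by linarith
  have hle : N ((1 + δ) • z) ≤ 1 := hball hmem
  rw [hN_smul, abs_of_pos (by linarith)] at hle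
  have hnn := nonnegN N hN_add hN_smul z
  nlinarith

lemma min_unique (N : EE → ℝ)
    (hN_add : ∀ x y : EE, N (x + y) ≤ N x + N y)
    (hN_smul : ∀ (c : ℝ) (x : EE), N (c • x) = |c| * N x)
    (hN_zero : ∀ x : EE, N x = 0 → x = 0)
    (hN_strict : StrictConvex ℝ {x : EE | N x ≤ 1})
    {v x p : EE} (hp_perp : ⟪v, p⟫ = 0)
    (hmin0 : ∀ q : EE, ⟪v, q⟫ = 0 → N x ≤ N (x - q))
    (hminp : N (x - p) ≤ N x) (hx : x ≠ 0) : p = 0 := by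
  by_contra hp
  set m := N x with hm
  have hm0 : 0 < m := lt_of_le_of_ne (nonnegN N hN_add hN_smul x)
    (fun h => hx (hN_zero x h.symm))
  have hNp : N (x - p) = m := le_antisymm hminp (hmin0 p hp_perp)
  set a' : EE := m⁻¹ • (x - p) with ha'
  set b' : EE := m⁻¹ • x with hb'
  have ha1 : N a' = 1 := by
    rw [ha', hN_smul, abs_of_pos (inv_pos.mpr hm0), hNp]
    field_simp
  have hb1 : N b' = 1 := by
    rw [hb', hN_smul, abs_of_pos (inv_pos.mpr hm0), ← hm]
    field_simp
  have hne : a' ≠ b' := by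
    intro h
    apply hp
    have := smul_right_injective EE (by positivity : m⁻¹ ≠ 0) h
    have h2 : x - p = x := this
    simpa [sub_eq_iff_eq_add] using h2
  have hmemint : (2⁻¹ : ℝ) • a' + (2⁻¹ : ℝ) • b' ∈ interior {x : EE | N x ≤ 1} :=
    hN_strict (by simp [ha1]) (by simp [hb1]) hne (by norm_num) (by norm_num) (by norm_num)
  set z := (2⁻¹ : ℝ) • a' + (2⁻¹ : ℝ) • b' with hzdef
  have hlt : N z < 1 := interior_lt N hN_add hN_smul hmemint
  have hmz : m • z = x - (2⁻¹ : ℝ) • p := by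
    rw [hzdef, ha', hb']
    match_scalars <;> field_simp <;> ring
  have hperp2 : ⟪v, (2⁻¹ : ℝ) • p⟫ = 0 := by
    rw [real_inner_smul_right, hp_perp, mul_zero]
  have h1 := hmin0 _ hperp2
  rw [← hmz, hN_smul, abs_of_pos hm0] at h1
  nlinarith

/-- for a strictly convex norm `N` on ℝ², `C¹` away from `0`, with
bijective Gauss map `G`: for `x ≠ 0` and `v ∈ S¹`, `P_v(x) = 0` iff `x` is
collinear to `G⁻¹(v)`; consequently every `x ≠ 0` admits a direction `v₀ ∈ S¹`
with `P_{v₀}(x) = 0`, and the only other such direction is `−v₀`. -/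
theorem projection_vanishes_iff_collinear
    (N : EuclideanSpace ℝ (Fin 2) → ℝ)
    (hN_add : ∀ x y : EuclideanSpace ℝ (Fin 2), N (x + y) ≤ N x + N y)
    (hN_smul : ∀ (c : ℝ) (x : EuclideanSpace ℝ (Fin 2)), N (c • x) = |c| * N x)
    (hN_zero : ∀ x : EuclideanSpace ℝ (Fin 2), N x = 0 → x = 0)
    (hN_strict : StrictConvex ℝ {x : EuclideanSpace ℝ (Fin 2) | N x ≤ 1})
    (hN_C1 : ContDiffOn ℝ 1 N ({0}ᶜ : Set (EuclideanSpace ℝ (Fin 2))))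
    -- the Gauss map `G x = ∇N(x)/‖∇N(x)‖` is a bijection from the `N`-unit
    -- sphere onto `S¹`, with inverse `Ginv`:
    (hG_bij : Set.BijOn
      (fun x : EuclideanSpace ℝ (Fin 2) => ‖gradient N x‖⁻¹ • gradient N x)
      {x : EuclideanSpace ℝ (Fin 2) | N x = 1}
      (sphere (0 : EuclideanSpace ℝ (Fin 2)) 1))
    (Ginv : EuclideanSpace ℝ (Fin 2) → EuclideanSpace ℝ (Fin 2))
    (hGinv : Set.InvOn Ginv
      (fun x : EuclideanSpace ℝ (Fin 2) => ‖gradient N x‖⁻¹ • gradient N x)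
      {x : EuclideanSpace ℝ (Fin 2) | N x = 1}
      (sphere (0 : EuclideanSpace ℝ (Fin 2)) 1))
    -- `P v` is the closest-point projection (w.r.t. `N`) onto the line `H_v`:
    (P : EuclideanSpace ℝ (Fin 2) → EuclideanSpace ℝ (Fin 2) → EuclideanSpace ℝ (Fin 2))
    (hP : ∀ v ∈ sphere (0 : EuclideanSpace ℝ (Fin 2)) 1, ∀ x : EuclideanSpace ℝ (Fin 2),
      ⟪v, P v x⟫ = 0 ∧
        ∀ q : EuclideanSpace ℝ (Fin 2), ⟪v, q⟫ = 0 → N (x - P v x) ≤ N (x - q)) :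
    (∀ v ∈ sphere (0 : EuclideanSpace ℝ (Fin 2)) 1,
      ∀ x : EuclideanSpace ℝ (Fin 2), x ≠ 0 →
        (P v x = 0 ↔ ∃ c : ℝ, x = c • Ginv v)) ∧
    (∀ x : EuclideanSpace ℝ (Fin 2), x ≠ 0 →
      ∃ v₀ ∈ sphere (0 : EuclideanSpace ℝ (Fin 2)) 1, P v₀ x = 0 ∧
        ∀ v ∈ sphere (0 : EuclideanSpace ℝ (Fin 2)) 1,
          P v x = 0 → v = v₀ ∨ v = -v₀) := by
  have hN0 : N 0 = 0 := by simpa using hN_smul 0 0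
  have hpos : ∀ x : EE, x ≠ 0 → 0 < N x := fun x hx =>
    lt_of_le_of_ne (nonnegN N hN_add hN_smul x) (fun h => hx (hN_zero x h.symm))
  have hgrad_ne : ∀ u : EE, N u = 1 → gradient N u ≠ 0 := by
    intro u hu h0
    have hm := hG_bij.mapsTo (show u ∈ {x : EE | N x = 1} from hu)
    simp only [mem_sphere_zero_iff_norm] at hm
    rw [h0] at hm
    simp at hm
  have hodd : ∀ u : EE, u ≠ 0 → gradient N (-u) = -gradient N u := by
    intro u hu
    have := grad_homog N hN_smul hN_C1 hu (c := (-1:ℝ)) (by norm_num)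
    simpa using this
  have hGinv_mem : ∀ v ∈ sphere (0 : EE) 1, N (Ginv v) = 1 := by
    intro v hv
    obtain ⟨u, hu, hGu⟩ := hG_bij.surjOn hv
    have h2 : Ginv v = u := by rw [← hGu]; exact hGinv.1 hu
    rw [h2]; exact hu
  -- Part 1
  have part1 : ∀ v ∈ sphere (0 : EE) 1, ∀ x : EE, x ≠ 0 →
      (P v x = 0 ↔ ∃ c : ℝ, x = c • Ginv v) := by
    intro v hv x hx
    have hv1 : ‖v‖ = 1 := by rwa [mem_sphere_zero_iff_norm] at hv
    constructor
    · intro hPv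
      have hmin : ∀ q : EE, ⟪v, q⟫ = 0 → N x ≤ N (x - q) := by
        intro q hq
        have := (hP v hv x).2 q hq
        rwa [hPv, sub_zero] at this
      have hperp : ∀ q : EE, ⟪v, q⟫ = 0 → ⟪gradient N x, q⟫ = 0 := by
        intro q hq
        apply grad_perp N hN_C1 hx
        intro t
        have hq' : ⟪v, (-t) • q⟫ = 0 := by rw [real_inner_smul_right, hq, mul_zero]
        have h2 := hmin _ hq'
        have e : x - (-t) • q = x + t • q := by module
        rwa [e] at h2
      have hz := span2 hv1 hperp
      set lam := ⟪v, gradient N x⟫ with hlamdef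
      set m := N x with hmdef
      have hm0 : 0 < m := hpos x hx
      set u : EE := m⁻¹ • x with hudef
      have hu1 : N u = 1 := by
        rw [hudef, hN_smul, abs_of_pos (inv_pos.mpr hm0), ← hmdef]
        field_simp
      have hgu : gradient N u = gradient N x := by
        have h := grad_homog N hN_smul hN_C1 hx (c := m⁻¹) (ne_of_gt (inv_pos.mpr hm0))
        rw [hudef, h, abs_of_pos (inv_pos.mpr hm0),
          div_self (ne_of_gt (inv_pos.mpr hm0)), one_smul]
      have hzne : gradient N x ≠ 0 := hgu ▸ hgrad_ne u hu1
      have hlam : lam ≠ 0 := by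
        intro h
        apply hzne
        rw [hz, h, zero_smul]
      have hune : u ≠ 0 := fun h => by rw [h, hN0] at hu1; norm_num at hu1
      have hxmu : x = m • u := by
        rw [hudef, smul_smul, mul_inv_cancel₀ (ne_of_gt hm0), one_smul]
      rcases hlam.lt_or_gt with hneg | hposl
      · have hNnu : N (-u) = 1 := by
          have := hN_smul (-1) u
          simpa [hu1] using this
        have hGnu : ‖gradient N (-u)‖⁻¹ • gradient N (-u) = v := by
          rw [hodd u hune, hgu, hz, norm_neg, norm_smul, hv1, Real.norm_eq_abs,
            abs_of_neg hneg, mul_one, ← neg_smul, smul_smul]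
          rw [inv_mul_cancel₀ (by linarith : -lam ≠ 0), one_smul]
        have hGi : Ginv v = -u := by
          have := hGinv.1 (show -u ∈ {x : EE | N x = 1} from hNnu)
          beta_reduce at this
          rwa [hGnu] at this
        exact ⟨-m, by rw [hGi, smul_neg, neg_smul, neg_neg, ← hxmu]⟩
      · have hGu : ‖gradient N u‖⁻¹ • gradient N u = v := by
          rw [hgu, hz, norm_smul, hv1, Real.norm_eq_abs, abs_of_pos hposl, mul_one,
            smul_smul, inv_mul_cancel₀ (ne_of_gt hposl), one_smul]
        have hGi : Ginv v = u := by
          have := hGinv.1 (show u ∈ {x : EE | N x = 1} from hu1)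
          beta_reduce at this
          rwa [hGu] at this
        exact ⟨m, by rw [hGi, ← hxmu]⟩
    · rintro ⟨c, hc⟩
      set y := Ginv v with hydef
      have hy1 : N y = 1 := hGinv_mem v hv
      have hyne : y ≠ 0 := fun h => by rw [h, hN0] at hy1; norm_num at hy1
      have hgy : ‖gradient N y‖⁻¹ • gradient N y = v := hGinv.2 hv
      have hgyne : gradient N y ≠ 0 := hgrad_ne y hy1
      have hgyv : gradient N y = ‖gradient N y‖ • v := by
        rw [← hgy, smul_smul, mul_inv_cancel₀ (norm_ne_zero_iff.mpr hgyne), one_smul]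
      have hc0 : c ≠ 0 := fun h => hx (by rw [hc, h, zero_smul])
      have hgx : gradient N x = (|c| / c) • gradient N y := by
        rw [hc]; exact grad_homog N hN_smul hN_C1 hyne hc0
      have hperp : ∀ q : EE, ⟪v, q⟫ = 0 → ⟪gradient N x, q⟫ = 0 := by
        intro q hq
        rw [hgx, hgyv, real_inner_smul_left, real_inner_smul_left, hq]
        ring
      have hmin : ∀ q : EE, ⟪v, q⟫ = 0 → N x ≤ N (x - q) := by
        intro q hq
        have hs := subgrad N hN_add hN_smul hN_C1 hx (x - q)
        have e : (x - q) - x = -q := by abel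
        rw [e, inner_neg_right, hperp q hq] at hs
        linarith
      have hp1 := (hP v hv x).1
      have hp2 := (hP v hv x).2 0 (by rw [inner_zero_right])
      rw [sub_zero] at hp2
      exact min_unique N hN_add hN_smul hN_zero hN_strict hp1 hmin hp2 hx
  refine ⟨part1, ?_⟩
  intro x hx
  set m := N x with hmdef
  have hm0 : 0 < m := hpos x hx
  set u : EE := m⁻¹ • x with hudef
  have hu1 : N u = 1 := by
    rw [hudef, hN_smul, abs_of_pos (inv_pos.mpr hm0), ← hmdef]
    field_simp
  have hune : u ≠ 0 := fun h => by rw [h, hN0] at hu1; norm_num at hu1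
  have hxmu : x = m • u := by
    rw [hudef, smul_smul, mul_inv_cancel₀ (ne_of_gt hm0), one_smul]
  set v₀ : EE := ‖gradient N u‖⁻¹ • gradient N u with hv₀def
  have hv₀ : v₀ ∈ sphere (0 : EE) 1 :=
    hG_bij.mapsTo (show u ∈ {x : EE | N x = 1} from hu1)
  have hGiu : Ginv v₀ = u := hGinv.1 (show u ∈ {x : EE | N x = 1} from hu1)
  have hPv₀ : P v₀ x = 0 := (part1 v₀ hv₀ x hx).mpr ⟨m, by rw [hGiu, ← hxmu]⟩
  refine ⟨v₀, hv₀, hPv₀, ?_⟩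
  intro v hv hPv
  obtain ⟨c, hc⟩ := (part1 v hv x hx).mp hPv
  have hy1 : N (Ginv v) = 1 := hGinv_mem v hv
  have hc0 : c ≠ 0 := fun h => hx (by rw [hc, h, zero_smul])
  have hGiv : Ginv v = (c⁻¹ * m) • u := by
    have : c⁻¹ • x = Ginv v := by rw [hc, smul_smul, inv_mul_cancel₀ hc0, one_smul]
    rw [← this, hxmu, smul_smul]
  have habs : |c⁻¹ * m| = 1 := by
    rw [hGiv, hN_smul, hu1, mul_one] at hy1
    exact hy1
  rcases abs_eq (by norm_num : (0:ℝ) ≤ 1) |>.mp habs with h1 | h1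
  · left
    have : Ginv v = u := by rw [hGiv, h1, one_smul]
    have h2 := hGinv.2 hv
    rw [this] at h2
    rw [← h2, hv₀def]
  · right
    have hGivnu : Ginv v = -u := by rw [hGiv, h1, neg_one_smul]
    have h2 := hGinv.2 hv
    rw [hGivnu] at h2
    beta_reduce at h2
    rw [← h2, hodd u hune, norm_neg, smul_neg, hv₀def]
end
end

section
/- Let N be a norm on ℝ² whose restriction to ℝ² \ {0} is of class C² and whose Gauss map G : ∂B_N(0,1) → S¹ is a C¹-diffeomorphism. Fix x ∈ ℝ² \ {0} and t₀ ∈ ℝ such that P_{v(t₀)}(x) = 0, and define ψ : ℝ → ℝ by ψ(t) = ⟨v(t), x⟩ / ⟨v(t), G⁻¹(v(t))⟩. Then ψ(t₀) ≠ 0 and ψ'(t₀) = 0. -/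
open Set Metric Real
open scoped RealInnerProductSpace

noncomputable section

/-- The point `(a, b)` of the Euclidean plane. -/
def mk2 (a b : ℝ) : EuclideanSpace ℝ (Fin 2) :=
  (WithLp.equiv 2 (Fin 2 → ℝ)).symm ![a, b]

/-- The direction `v(t) = (cos t, sin t) ∈ S¹`. -/
def vdir (t : ℝ) : EuclideanSpace ℝ (Fin 2) :=
  mk2 (Real.cos t) (Real.sin t)

abbrev E2 := EuclideanSpace ℝ (Fin 2)

lemma inner_mk2 (a b : ℝ) (u : E2) : ⟪mk2 a b, u⟫ = a * u 0 + b * u 1 := by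
  simp [mk2, PiLp.inner_apply, Fin.sum_univ_two, RCLike.inner_apply]
  ring

lemma norm_vdir (t : ℝ) : ‖vdir t‖ = 1 := by
  have h1 : ⟪vdir t, vdir t⟫ = 1 := by
    rw [vdir, inner_mk2]
    simp [mk2]
    nlinarith [sin_sq_add_cos_sq t]
  have h := real_inner_self_eq_norm_sq (vdir t)
  nlinarith [norm_nonneg (vdir t)]

lemma hasDerivAt_vdir (t : ℝ) : HasDerivAt vdir (mk2 (-Real.sin t) (Real.cos t)) t := by
  have h : HasDerivAt (fun s => (![Real.cos s, Real.sin s] : Fin 2 → ℝ))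
      ![-Real.sin t, Real.cos t] t := by
    apply hasDerivAt_pi.mpr
    intro i
    fin_cases i
    · simpa using (Real.hasDerivAt_cos t)
    · simpa using (Real.hasDerivAt_sin t)
  have := ((EuclideanSpace.equiv (Fin 2) ℝ).symm).hasFDerivAt.comp_hasDerivAt t h
  have hv : vdir = ⇑(EuclideanSpace.equiv (Fin 2) ℝ).symm ∘ fun s => ![Real.cos s, Real.sin s] := by
    funext s; rfl
  rw [hv]
  simpa [mk2] using this

lemma span2_s14 (t : ℝ) (u : E2) (h : ⟪mk2 (-Real.sin t) (Real.cos t), u⟫ = 0) :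
    u = ⟪vdir t, u⟫ • vdir t := by
  rw [inner_mk2] at h
  have hv : ⟪vdir t, u⟫ = Real.cos t * u 0 + Real.sin t * u 1 := by rw [vdir, inner_mk2]
  have hpy : Real.sin t ^ 2 + Real.cos t ^ 2 = 1 := sin_sq_add_cos_sq t
  ext i
  fin_cases i
  · show u 0 = ⟪vdir t, u⟫ * Real.cos t
    rw [hv]; linear_combination (-(u 0)) * hpy + (-(Real.sin t)) * h
  · show u 1 = ⟪vdir t, u⟫ * Real.sin t
    rw [hv]; linear_combination (-(u 1)) * hpy + (Real.cos t) * h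

lemma inner_gradient (f : E2 → ℝ) (p w : E2) : ⟪gradient f p, w⟫ = fderiv ℝ f p w := by
  rw [gradient]
  exact InnerProductSpace.toDual_symm_apply

section Nlem
variable (N : E2 → ℝ)

lemma N_diff (hN_C2 : ContDiffOn ℝ 2 N ({0}ᶜ : Set E2)) (p : E2) (hp : p ≠ 0) :
    DifferentiableAt ℝ N p := by
  have := hN_C2.contDiffAt (isOpen_compl_singleton.mem_nhds hp)
  exact this.differentiableAt (by norm_num)

lemma N_pos (hN_add : ∀ x y : E2, N (x + y) ≤ N x + N y)
    (hN_smul : ∀ (c : ℝ) (x : E2), N (c • x) = |c| * N x)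
    (hN_zero : ∀ x : E2, N x = 0 → x = 0) (p : E2) (hp : p ≠ 0) : 0 < N p := by
  have hzero : N 0 = 0 := by simpa using hN_smul 0 0
  have hneg : N (-p) = N p := by simpa using hN_smul (-1) p
  have h := hN_add p (-p)
  rw [add_neg_cancel, hzero, hneg] at h
  have hnn : 0 ≤ N p := by linarith
  rcases hnn.lt_or_eq with h' | h'
  · exact h'
  · exact absurd (hN_zero p h'.symm) hp

lemma euler_s14 (hN_C2 : ContDiffOn ℝ 2 N ({0}ᶜ : Set E2))
    (hN_smul : ∀ (c : ℝ) (x : E2), N (c • x) = |c| * N x)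
    (p : E2) (hp : p ≠ 0) : fderiv ℝ N p p = N p := by
  have hd := N_diff N hN_C2 p hp
  have hsp : HasDerivAt (fun s : ℝ => s • p) p 1 := by
    simpa using (hasDerivAt_id (1:ℝ)).smul_const p
  have hfd : HasFDerivAt N (fderiv ℝ N p) ((1:ℝ) • p) := by
    simpa using hd.hasFDerivAt
  have h1 : HasDerivAt (fun s : ℝ => N (s • p)) (fderiv ℝ N p p) 1 :=
    hfd.comp_hasDerivAt 1 hsp
  have heq : (fun s : ℝ => N (s • p)) =ᶠ[nhds 1] fun s => s * N p := by
    filter_upwards [Ioi_mem_nhds (by norm_num : (0:ℝ) < 1)] with s hs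
    rw [hN_smul, abs_of_pos hs]
  have h2 : HasDerivAt (fun s : ℝ => N (s • p)) (N p) 1 := by
    have := (hasDerivAt_id (1:ℝ)).mul_const (N p)
    exact (by simpa using this : HasDerivAt (fun s : ℝ => s * N p) (N p) 1).congr_of_eventuallyEq heq
  exact h1.unique h2

lemma fderiv_hom (hN_C2 : ContDiffOn ℝ 2 N ({0}ᶜ : Set E2))
    (hN_smul : ∀ (c : ℝ) (x : E2), N (c • x) = |c| * N x)
    (c : ℝ) (hc : c ≠ 0) (p : E2) (hp : p ≠ 0) :
    fderiv ℝ N (c • p) = (|c| / c) • fderiv ℝ N p := by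
  have hcp : c • p ≠ 0 := smul_ne_zero hc hp
  have hg : HasFDerivAt (fun q : E2 => c • q) (c • ContinuousLinearMap.id ℝ E2) p :=
    (hasFDerivAt_id p).const_smul c
  have h1 : HasFDerivAt (fun q : E2 => N (c • q))
      ((fderiv ℝ N (c • p)).comp (c • ContinuousLinearMap.id ℝ E2)) p :=
    ((N_diff N hN_C2 _ hcp).hasFDerivAt).comp p hg
  have h2 : HasFDerivAt (fun q : E2 => N (c • q)) (|c| • fderiv ℝ N p) p := by
    have he : (fun q : E2 => N (c • q)) = fun q => |c| • N q := by
      funext q; simpa [smul_eq_mul] using hN_smul c q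
    rw [he]
    exact ((N_diff N hN_C2 p hp).hasFDerivAt).const_smul |c|
  have key := h1.unique h2
  ext u
  have := congrArg (fun L : E2 →L[ℝ] ℝ => L u) key
  simp only [ContinuousLinearMap.comp_apply, ContinuousLinearMap.smul_apply,
    ContinuousLinearMap.id_apply, smul_eq_mul, map_smul] at this ⊢
  field_simp
  linarith [this]

end Nlem

/-- for `N` of class `C²` away from `0` with Gauss map a
`C¹`-diffeomorphism, if `x ≠ 0` and `P_{v(t₀)}(x) = 0`, then the function
`ψ(t) = ⟪v(t), x⟫ / ⟪v(t), G⁻¹(v(t))⟫` satisfies `ψ(t₀) ≠ 0` and `ψ'(t₀) = 0`. -/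
theorem psi_ne_zero_and_deriv_psi_eq_zero
    (N : EuclideanSpace ℝ (Fin 2) → ℝ)
    (hN_add : ∀ x y : EuclideanSpace ℝ (Fin 2), N (x + y) ≤ N x + N y)
    (hN_smul : ∀ (c : ℝ) (x : EuclideanSpace ℝ (Fin 2)), N (c • x) = |c| * N x)
    (hN_zero : ∀ x : EuclideanSpace ℝ (Fin 2), N x = 0 → x = 0)
    (hN_C2 : ContDiffOn ℝ 2 N ({0}ᶜ : Set (EuclideanSpace ℝ (Fin 2))))
    -- the Gauss map `G x = ∇N(x)/‖∇N(x)‖` is a `C¹`-diffeomorphism from the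
    -- `N`-unit sphere onto `S¹`, with inverse `Ginv`:
    (Ginv : EuclideanSpace ℝ (Fin 2) → EuclideanSpace ℝ (Fin 2))
    (hG_bij : Set.BijOn
      (fun x : EuclideanSpace ℝ (Fin 2) => ‖gradient N x‖⁻¹ • gradient N x)
      {x : EuclideanSpace ℝ (Fin 2) | N x = 1}
      (sphere (0 : EuclideanSpace ℝ (Fin 2)) 1))
    (hGinv : Set.InvOn Ginv
      (fun x : EuclideanSpace ℝ (Fin 2) => ‖gradient N x‖⁻¹ • gradient N x)
      {x : EuclideanSpace ℝ (Fin 2) | N x = 1}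
      (sphere (0 : EuclideanSpace ℝ (Fin 2)) 1))
    (hGinv_C1 : ContDiff ℝ 1 (fun t : ℝ => Ginv (vdir t)))
    (hGinv_reg : ∀ t : ℝ, deriv (fun s : ℝ => Ginv (vdir s)) t ≠ 0)
    -- `P v` is the closest-point projection (w.r.t. `N`) onto `H_v`:
    (P : EuclideanSpace ℝ (Fin 2) → EuclideanSpace ℝ (Fin 2) → EuclideanSpace ℝ (Fin 2))
    (hP : ∀ v ∈ sphere (0 : EuclideanSpace ℝ (Fin 2)) 1, ∀ x : EuclideanSpace ℝ (Fin 2),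
      ⟪v, P v x⟫ = 0 ∧
        ∀ q : EuclideanSpace ℝ (Fin 2), ⟪v, q⟫ = 0 → N (x - P v x) ≤ N (x - q))
    (x : EuclideanSpace ℝ (Fin 2)) (hx : x ≠ 0)
    (t₀ : ℝ) (hx0 : P (vdir t₀) x = 0) :
    (fun t : ℝ => ⟪vdir t, x⟫ / ⟪vdir t, Ginv (vdir t)⟫) t₀ ≠ 0 ∧
    deriv (fun t : ℝ => ⟪vdir t, x⟫ / ⟪vdir t, Ginv (vdir t)⟫) t₀ = 0 := by
  classical
  have hN00 : N (0 : E2) = 0 := by simpa using hN_smul 0 0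
  have hNx : 0 < N x := N_pos N hN_add hN_smul hN_zero x hx
  have hv_mem : ∀ t : ℝ, vdir t ∈ sphere (0 : E2) 1 := fun t => by
    simpa [mem_sphere_iff_norm] using norm_vdir t
  have hNy : ∀ t : ℝ, N (Ginv (vdir t)) = 1 := by
    intro t
    obtain ⟨z₁, hz₁, hz₁'⟩ := hG_bij.surjOn (hv_mem t)
    have h2 : Ginv (vdir t) = z₁ := by rw [← hz₁']; exact hGinv.1 hz₁
    rw [h2]; exact hz₁
  -- first-order condition
  have hvw : ∀ s : ℝ, ⟪vdir t₀, s • mk2 (-Real.sin t₀) (Real.cos t₀)⟫ = 0 := by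
    intro s
    rw [vdir, inner_mk2]
    have h0 : (s • mk2 (-Real.sin t₀) (Real.cos t₀)) 0 = s * (-Real.sin t₀) := rfl
    have h1 : (s • mk2 (-Real.sin t₀) (Real.cos t₀)) 1 = s * Real.cos t₀ := rfl
    rw [h0, h1]; ring
  have hmin : IsLocalMin (fun s : ℝ => N (x - s • mk2 (-Real.sin t₀) (Real.cos t₀))) 0 := by
    apply Filter.Eventually.of_forall
    intro s
    have := (hP (vdir t₀) (hv_mem t₀) x).2 (s • mk2 (-Real.sin t₀) (Real.cos t₀)) (hvw s)
    rw [hx0] at this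
    simpa using this
  have hderivg : HasDerivAt (fun s : ℝ => N (x - s • mk2 (-Real.sin t₀) (Real.cos t₀)))
      (fderiv ℝ N x (-(mk2 (-Real.sin t₀) (Real.cos t₀)))) 0 := by
    have hsw : HasDerivAt (fun s : ℝ => x - s • mk2 (-Real.sin t₀) (Real.cos t₀))
        (-(mk2 (-Real.sin t₀) (Real.cos t₀))) 0 := by
      have h : HasDerivAt (fun s : ℝ => s • mk2 (-Real.sin t₀) (Real.cos t₀))
          (mk2 (-Real.sin t₀) (Real.cos t₀)) 0 := by
        simpa using (hasDerivAt_id (0:ℝ)).smul_const (mk2 (-Real.sin t₀) (Real.cos t₀))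
      simpa using h.const_sub x
    have hfd : HasFDerivAt N (fderiv ℝ N x) (x - (0:ℝ) • mk2 (-Real.sin t₀) (Real.cos t₀)) := by
      simpa using (N_diff N hN_C2 x hx).hasFDerivAt
    exact hfd.comp_hasDerivAt 0 hsw
  have hfx_w : fderiv ℝ N x (mk2 (-Real.sin t₀) (Real.cos t₀)) = 0 := by
    have h0 := hmin.deriv_eq_zero
    rw [hderivg.deriv, map_neg] at h0
    linarith
  -- gradient N x = lam • v
  have huw : ⟪mk2 (-Real.sin t₀) (Real.cos t₀), gradient N x⟫ = 0 := by
    rw [real_inner_comm, inner_gradient, hfx_w]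
  have hspan : gradient N x = ⟪vdir t₀, gradient N x⟫ • vdir t₀ := by
    exact span2_s14 t₀ (gradient N x) huw
  set lam : ℝ := ⟪vdir t₀, gradient N x⟫ with hlam_def
  have hux : ⟪gradient N x, x⟫ = N x := by
    rw [inner_gradient]; exact euler_s14 N hN_C2 hN_smul x hx
  have hlamvx : lam * ⟪vdir t₀, x⟫ = N x := by
    have h : ⟪gradient N x, x⟫ = lam * ⟪vdir t₀, x⟫ := by
      conv_lhs => rw [hspan]
      rw [real_inner_smul_left]
    linarith [hux, h]
  have hlam_ne : lam ≠ 0 := fun h => by rw [h, zero_mul] at hlamvx; linarith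
  have hvx_ne : ⟪vdir t₀, x⟫ ≠ 0 := fun h => by rw [h, mul_zero] at hlamvx; linarith
  -- the point z on the unit N-sphere
  have hNz : N ((N x)⁻¹ • x) = 1 := by
    rw [hN_smul, abs_of_pos (by positivity), inv_mul_cancel₀ hNx.ne']
  have hz_ne : (N x)⁻¹ • x ≠ 0 := fun h => by rw [h, hN00] at hNz; norm_num at hNz
  have hfz : fderiv ℝ N ((N x)⁻¹ • x) = fderiv ℝ N x := by
    have h := fderiv_hom N hN_C2 hN_smul ((N x)⁻¹) (inv_ne_zero hNx.ne') x hx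
    rw [abs_of_pos (inv_pos.mpr hNx), div_self (inv_ne_zero hNx.ne'), one_smul] at h
    exact h
  have hgz : gradient N ((N x)⁻¹ • x) = gradient N x := by
    rw [gradient, gradient, hfz]
  -- sign
  set s : ℝ := if 0 < lam then 1 else -1 with hs_def
  have hs_cases : (s = 1 ∧ 0 < lam) ∨ (s = -1 ∧ lam < 0) := by
    by_cases h : 0 < lam
    · exact Or.inl ⟨if_pos h, h⟩
    · exact Or.inr ⟨if_neg h, lt_of_le_of_ne (not_lt.mp h) hlam_ne⟩
  have hs_ne : s ≠ 0 := by rcases hs_cases with ⟨h, _⟩ | ⟨h, _⟩ <;> rw [h] <;> norm_num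
  have hs_abs : |s| = 1 := by rcases hs_cases with ⟨h, _⟩ | ⟨h, _⟩ <;> rw [h] <;> norm_num
  have hs_sq : s * s = 1 := by rcases hs_cases with ⟨h, _⟩ | ⟨h, _⟩ <;> rw [h] <;> norm_num
  have hslam : s * lam = |lam| := by
    rcases hs_cases with ⟨h, h'⟩ | ⟨h, h'⟩
    · rw [h, one_mul, abs_of_pos h']
    · rw [h, abs_of_neg h']; ring
  have hlam_abs_pos : 0 < |lam| := abs_pos.mpr hlam_ne
  have hNsz : N (s • ((N x)⁻¹ • x)) = 1 := by rw [hN_smul, hs_abs, one_mul, hNz]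
  have hgsz : gradient N (s • ((N x)⁻¹ • x)) = (s * lam) • vdir t₀ := by
    have hf := fderiv_hom N hN_C2 hN_smul s hs_ne ((N x)⁻¹ • x) hz_ne
    rw [hs_abs] at hf
    have h1s : (1 : ℝ) / s = s := by
      rcases hs_cases with ⟨h, _⟩ | ⟨h, _⟩ <;> rw [h] <;> norm_num
    rw [h1s] at hf
    rw [gradient, hf, map_smul]
    have : (InnerProductSpace.toDual ℝ E2).symm (fderiv ℝ N ((N x)⁻¹ • x))
        = gradient N ((N x)⁻¹ • x) := rfl
    rw [this, hgz]
    conv_lhs => rw [hspan]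
    rw [smul_smul]
  have hGsz : ‖gradient N (s • ((N x)⁻¹ • x))‖⁻¹ • gradient N (s • ((N x)⁻¹ • x)) = vdir t₀ := by
    rw [hgsz, hslam, norm_smul, Real.norm_eq_abs, abs_abs, norm_vdir, mul_one, smul_smul,
      inv_mul_cancel₀ hlam_abs_pos.ne', one_smul]
  have hy0 : Ginv (vdir t₀) = s • ((N x)⁻¹ • x) := by
    have h := hGinv.1 (show s • ((N x)⁻¹ • x) ∈ {p : E2 | N p = 1} from hNsz)
    simp only at h
    rw [hGsz] at h
    exact h
  -- x = c • Ginv (vdir t₀)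
  have hxc : x = (s * N x) • Ginv (vdir t₀) := by
    rw [hy0, smul_smul, smul_smul]
    have hcoef : s * N x * s * (N x)⁻¹ = 1 := by
      have h' : s * N x * s * (N x)⁻¹ = (s * s) * (N x * (N x)⁻¹) := by ring
      rw [h', hs_sq, mul_inv_cancel₀ hNx.ne', one_mul]
    rw [hcoef, one_smul]
  have hc_ne : s * N x ≠ 0 := mul_ne_zero hs_ne hNx.ne'
  have hb0_eq : ⟪vdir t₀, x⟫ = (s * N x) * ⟪vdir t₀, Ginv (vdir t₀)⟫ := by
    conv_lhs => rw [hxc]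
    rw [real_inner_smul_right]
  have hb0_ne : ⟪vdir t₀, Ginv (vdir t₀)⟫ ≠ 0 := fun h =>
    hvx_ne (by rw [hb0_eq, h, mul_zero])
  constructor
  · show ⟪vdir t₀, x⟫ / ⟪vdir t₀, Ginv (vdir t₀)⟫ ≠ 0
    exact div_ne_zero hvx_ne hb0_ne
  -- derivative part
  have hya : HasDerivAt (fun t : ℝ => Ginv (vdir t))
      (deriv (fun t : ℝ => Ginv (vdir t)) t₀) t₀ :=
    ((hGinv_C1.differentiable one_ne_zero) t₀).hasDerivAt
  have hy0_ne : Ginv (vdir t₀) ≠ 0 := fun h => by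
    have := hNy t₀; rw [h, hN00] at this; norm_num at this
  have hfy' : fderiv ℝ N (Ginv (vdir t₀)) (deriv (fun t : ℝ => Ginv (vdir t)) t₀) = 0 := by
    have hcomp : HasDerivAt (fun t : ℝ => N (Ginv (vdir t)))
        (fderiv ℝ N (Ginv (vdir t₀)) (deriv (fun t : ℝ => Ginv (vdir t)) t₀)) t₀ :=
      ((N_diff N hN_C2 _ hy0_ne).hasFDerivAt).comp_hasDerivAt t₀ hya
    have hconst : (fun t : ℝ => N (Ginv (vdir t))) = fun _ => (1 : ℝ) := funext hNy
    rw [hconst] at hcomp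
    exact hcomp.unique (hasDerivAt_const t₀ 1)
  have hvy' : ⟪vdir t₀, deriv (fun t : ℝ => Ginv (vdir t)) t₀⟫ = 0 := by
    have hGy := hGinv.2 (hv_mem t₀)
    simp only at hGy
    have hg0_ne : ‖gradient N (Ginv (vdir t₀))‖ ≠ 0 := by
      intro h
      rw [h, inv_zero, zero_smul] at hGy
      have := norm_vdir t₀
      rw [← hGy] at this
      norm_num at this
    rw [← hGy, real_inner_smul_left, inner_gradient, hfy', mul_zero]
  have ha : HasDerivAt (fun t : ℝ => ⟪vdir t, x⟫) ⟪mk2 (-Real.sin t₀) (Real.cos t₀), x⟫ t₀ := by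
    have := HasDerivAt.inner (𝕜 := ℝ) (hasDerivAt_vdir t₀) (hasDerivAt_const t₀ x)
    simpa using this
  have hb : HasDerivAt (fun t : ℝ => ⟪vdir t, Ginv (vdir t)⟫)
      ⟪mk2 (-Real.sin t₀) (Real.cos t₀), Ginv (vdir t₀)⟫ t₀ := by
    have := HasDerivAt.inner (𝕜 := ℝ) (hasDerivAt_vdir t₀) hya
    simpa [hvy'] using this
  have hψ : HasDerivAt (fun t : ℝ => ⟪vdir t, x⟫ / ⟪vdir t, Ginv (vdir t)⟫) _ t₀ :=
    ha.div hb hb0_ne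
  rw [hψ.deriv]
  have hwx : ⟪mk2 (-Real.sin t₀) (Real.cos t₀), x⟫
      = (s * N x) * ⟪mk2 (-Real.sin t₀) (Real.cos t₀), Ginv (vdir t₀)⟫ := by
    conv_lhs => rw [hxc]
    rw [real_inner_smul_right]
  rw [hwx, hb0_eq]
  ring
end
end

section
/- For every p with 2 ≤ p < ∞ there exists δ ∈ (0,1] such that the p-norm ‖(x,y)‖_p = (|x|^p + |y|^p)^{1/p}, restricted to ℝ² \ {0}, is of class C^{2,δ}. -/
open Set Metric Real

noncomputable section

/-- The `p`-norm `‖(x,y)‖_p = (|x|^p + |y|^p)^{1/p}` on the plane. -/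
def pNorm (p : ℝ) (x : EuclideanSpace ℝ (Fin 2)) : ℝ :=
  (|x 0| ^ p + |x 1| ^ p) ^ (1 / p)

namespace PNormProof

abbrev E2 := EuclideanSpace ℝ (Fin 2)

/-- `|t|^r` in a differentiation-friendly form. -/
def w (r t : ℝ) : ℝ := (t ^ 2) ^ (r / 2)

lemma w_eq_abs (r t : ℝ) : w r t = |t| ^ r := by
  rw [w, ← sq_abs t, ← Real.rpow_natCast |t| 2, ← Real.rpow_mul (abs_nonneg t)]
  congr 1
  push_cast
  ring

lemma w_nonneg (r t : ℝ) : 0 ≤ w r t := Real.rpow_nonneg (sq_nonneg t) _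

lemma w_zero (t : ℝ) : w 0 t = 1 := by simp [w]

lemma w_at_zero {r : ℝ} (hr : r ≠ 0) : w r 0 = 0 := by
  simp [w, Real.zero_rpow (div_ne_zero hr two_ne_zero)]

lemma continuous_w {r : ℝ} (hr : 0 ≤ r) : Continuous (w r) := by
  refine continuous_iff_continuousAt.2 fun t => ?_
  exact (Real.continuousAt_rpow_const _ _ (Or.inr (by positivity))).comp
    ((continuous_pow 2).continuousAt)

lemma hasDerivAt_w_ne {r : ℝ} (t : ℝ) (ht : t ≠ 0) :
    HasDerivAt (w r) (r * (t * w (r - 2) t)) t := by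
  have := (hasDerivAt_pow 2 t).rpow_const (p := r/2) (Or.inl (pow_ne_zero 2 ht))
  convert this using 1
  · rfl
  rw [w, show r/2 - 1 = (r-2)/2 by ring]
  push_cast
  ring

lemma hasDerivAt_w {r : ℝ} (hr : 1 < r) (t : ℝ) :
    HasDerivAt (w r) (r * (t * w (r - 2) t)) t := by
  rcases eq_or_ne t 0 with rfl | ht
  · rw [hasDerivAt_iff_tendsto_slope]
    have hslope : ∀ h ∈ ({(0:ℝ)}ᶜ : Set ℝ), ‖slope (w r) 0 h‖ ≤ |h| ^ (r - 1) := by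
      intro h hh
      have hh : h ≠ 0 := hh
      have hhp : (0:ℝ) < |h| := abs_pos.2 hh
      rw [slope_def_field, w_at_zero (by positivity : r ≠ 0), sub_zero, sub_zero, w_eq_abs,
        Real.norm_eq_abs, abs_div, abs_of_nonneg (Real.rpow_nonneg (abs_nonneg h) r),
        Real.rpow_sub hhp, Real.rpow_one]
    have hlim : Filter.Tendsto (fun h : ℝ => |h| ^ (r - 1)) (nhdsWithin 0 {(0:ℝ)}ᶜ) (nhds 0) := by
      have hc : Filter.Tendsto (fun h : ℝ => |h| ^ (r - 1)) (nhds 0) (nhds (|(0:ℝ)| ^ (r-1))) :=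
        ((Real.continuousAt_rpow_const _ _ (Or.inr (by linarith))).comp
          continuous_abs.continuousAt)
      rw [abs_zero, Real.zero_rpow (sub_ne_zero.2 hr.ne')] at hc
      exact hc.mono_left nhdsWithin_le_nhds
    have h0 : r * ((0:ℝ) * w (r-2) 0) = 0 := by ring
    rw [h0]
    exact squeeze_zero_norm' (Filter.eventually_of_mem self_mem_nhdsWithin hslope) hlim
  · exact hasDerivAt_w_ne t ht

lemma hasDerivAt_tw {q : ℝ} (hq : 0 ≤ q) (t : ℝ) :
    HasDerivAt (fun s => s * w q s) ((1 + q) * w q t) t := by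
  rcases eq_or_lt_of_le hq with rfl | hq'
  · have he : (fun s : ℝ => s * w 0 s) = fun s : ℝ => s := by
      funext s; rw [w_zero, mul_one]
    rw [he, w_zero]
    simpa using hasDerivAt_id' t
  · rcases eq_or_ne t 0 with rfl | ht
    · rw [hasDerivAt_iff_tendsto_slope]
      have hs : ∀ h ∈ ({(0:ℝ)}ᶜ : Set ℝ), ‖slope (fun s => s * w q s) 0 h‖ ≤ ‖w q h‖ := by
        intro h hh
        have hh : h ≠ 0 := hh
        rw [slope_def_field, w_at_zero hq'.ne', mul_zero, sub_zero, sub_zero, mul_comm,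
          mul_div_assoc, div_self hh, mul_one]
      have hlim : Filter.Tendsto (fun h : ℝ => ‖w q h‖) (nhdsWithin 0 {(0:ℝ)}ᶜ) (nhds 0) := by
        have hc : Filter.Tendsto (fun h : ℝ => ‖w q h‖) (nhds 0) (nhds ‖w q 0‖) :=
          ((continuous_w hq).norm.continuousAt)
        rw [w_at_zero hq'.ne', norm_zero] at hc
        exact hc.mono_left nhdsWithin_le_nhds
      have h0 : (1 + q) * w q 0 = 0 := by rw [w_at_zero hq'.ne', mul_zero]
      rw [h0]
      exact squeeze_zero_norm' (Filter.eventually_of_mem self_mem_nhdsWithin hs) hlim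
    · have hw : HasDerivAt (w q) (q * (t * w (q - 2) t)) t := hasDerivAt_w_ne t ht
      have := (hasDerivAt_id t).mul hw
      convert this using 1
      · rfl
      · rfl
      · rfl
      have ht2 : (0:ℝ) < t^2 := by positivity
      have hkey : t * (t * w (q-2) t) = w q t := by
        rw [w, w, show t * (t * (t^2)^((q-2)/2)) = t^2 * (t^2)^((q-2)/2) by ring,
          show (t:ℝ)^2 * (t^2)^((q-2)/2) = (t^2)^(1:ℝ) * (t^2)^((q-2)/2) by rw [Real.rpow_one],
          ← Real.rpow_add ht2]
        congr 1
        ring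
      simp only [id_eq, one_mul]
      rw [← hkey]
      ring





variable {p : ℝ}

def u1 (p t : ℝ) : ℝ := p * (t * w (p - 2) t)
def u2 (p t : ℝ) : ℝ := p * ((1 + (p - 2)) * w (p - 2) t)

lemma hasDerivAt_u (hp : 2 ≤ p) (t : ℝ) : HasDerivAt (w p) (u1 p t) t :=
  hasDerivAt_w (by linarith) t

lemma hasDerivAt_u1 (hp : 2 ≤ p) (t : ℝ) : HasDerivAt (u1 p) (u2 p t) t :=
  (hasDerivAt_tw (by linarith) t).const_mul p

lemma continuous_u2 (hp : 2 ≤ p) : Continuous (u2 p) :=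
  continuous_const.mul (continuous_const.mul (continuous_w (by linarith)))

lemma contDiff_w2 (hp : 2 ≤ p) : ContDiff ℝ 2 (w p) := by
  have h1 : deriv (w p) = u1 p := funext fun t => (hasDerivAt_u hp t).deriv
  have h2 : deriv (u1 p) = u2 p := funext fun t => (hasDerivAt_u1 hp t).deriv
  rw [show (2 : WithTop ℕ∞) = 1 + 1 from rfl, contDiff_succ_iff_deriv]
  refine ⟨fun t => (hasDerivAt_u hp t).differentiableAt, by simp, ?_⟩
  rw [h1, contDiff_one_iff_deriv, h2]
  exact ⟨fun t => (hasDerivAt_u1 hp t).differentiableAt, continuous_u2 hp⟩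

def gfun (p : ℝ) (x : E2) : ℝ := w p (x 0) + w p (x 1)

def gd (p : ℝ) (x : E2) : E2 →L[ℝ] ℝ :=
  u1 p (x 0) • EuclideanSpace.proj (0 : Fin 2) + u1 p (x 1) • EuclideanSpace.proj (1 : Fin 2)

lemma hasFDerivAt_g (hp : 2 ≤ p) (x : E2) : HasFDerivAt (gfun p) (gd p x) x := by
  have h0 : HasFDerivAt (w p ∘ ⇑(EuclideanSpace.proj (0 : Fin 2) : E2 →L[ℝ] ℝ))
      (u1 p (x 0) • (EuclideanSpace.proj (0 : Fin 2) : E2 →L[ℝ] ℝ)) x :=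
    (hasDerivAt_u hp (x 0)).comp_hasFDerivAt x ((EuclideanSpace.proj (0 : Fin 2) : E2 →L[ℝ] ℝ).hasFDerivAt (x := x))
  have h1 : HasFDerivAt (w p ∘ ⇑(EuclideanSpace.proj (1 : Fin 2) : E2 →L[ℝ] ℝ))
      (u1 p (x 1) • (EuclideanSpace.proj (1 : Fin 2) : E2 →L[ℝ] ℝ)) x :=
    (hasDerivAt_u hp (x 1)).comp_hasFDerivAt x ((EuclideanSpace.proj (1 : Fin 2) : E2 →L[ℝ] ℝ).hasFDerivAt (x := x))
  have := h0.add h1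
  exact this

lemma contDiff_g (hp : 2 ≤ p) : ContDiff ℝ 2 (gfun p) := by
  have := ((contDiff_w2 hp).comp (EuclideanSpace.proj (0 : Fin 2)).contDiff).add
    ((contDiff_w2 hp).comp (EuclideanSpace.proj (1 : Fin 2)).contDiff)
  unfold gfun
  simpa [gfun, Function.comp_def, PiLp.proj_apply] using this

lemma ne_zero_coords {x : E2} (hx : x ≠ 0) : x 0 ≠ 0 ∨ x 1 ≠ 0 := by
  by_contra h
  push_neg at h
  apply hx
  ext i
  fin_cases i <;> simp [h.1, h.2]

lemma w_pos_of_ne {r t : ℝ} (ht : t ≠ 0) : 0 < w r t := by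
  rw [w_eq_abs]
  exact Real.rpow_pos_of_pos (abs_pos.2 ht) r

lemma gfun_pos (hp : 2 ≤ p) {x : E2} (hx : x ≠ 0) : 0 < gfun p x := by
  rcases ne_zero_coords hx with h | h
  · exact add_pos_of_pos_of_nonneg (w_pos_of_ne h) (w_nonneg _ _)
  · exact add_pos_of_nonneg_of_pos (w_nonneg _ _) (w_pos_of_ne h)

lemma pNorm_eq (p : ℝ) : pNorm p = fun x => gfun p x ^ (1/p) := by
  funext x
  simp [pNorm, gfun, w_eq_abs]

lemma contDiffOn_pNorm (hp : 2 ≤ p) :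
    ContDiffOn ℝ 2 (pNorm p) ({0}ᶜ : Set E2) := by
  rw [pNorm_eq]
  intro x hx
  have hx' : x ≠ 0 := hx
  apply ContDiffAt.contDiffWithinAt
  exact (Real.contDiffAt_rpow_const_of_ne (gfun_pos hp hx').ne').comp x
    (contDiff_g hp).contDiffAt




def phi1 (p s : ℝ) : ℝ := (1/p) * s ^ (1/p - 1)
def phi2 (p s : ℝ) : ℝ := (1/p) * ((1/p - 1) * s ^ (1/p - 2))

lemma hasDerivAt_phi0 {p s : ℝ} (hs : s ≠ 0) :
    HasDerivAt (fun s : ℝ => s ^ (1/p)) (phi1 p s) s :=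
  Real.hasDerivAt_rpow_const (Or.inl hs)

lemma hasDerivAt_phi1 {p s : ℝ} (hs : s ≠ 0) : HasDerivAt (phi1 p) (phi2 p s) s := by
  have h2 : (1/p - 1 - 1 : ℝ) = 1/p - 2 := by ring
  have h := (Real.hasDerivAt_rpow_const (x := s) (p := 1/p - 1) (Or.inl hs)).const_mul (1/p)
  rw [h2] at h
  exact h

lemma hasFDerivAt_pNorm (hp : 2 ≤ p) {x : E2} (hx : x ≠ 0) :
    HasFDerivAt (pNorm p) (phi1 p (gfun p x) • gd p x) x := by
  rw [pNorm_eq]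
  exact (hasDerivAt_phi0 (gfun_pos hp hx).ne').comp_hasFDerivAt x (hasFDerivAt_g hp x)

lemma fderiv_pNorm (hp : 2 ≤ p) {y : E2} (hy : y ≠ 0) :
    fderiv ℝ (pNorm p) y = phi1 p (gfun p y) • gd p y :=
  (hasFDerivAt_pNorm hp hy).fderiv

def e2 (i : Fin 2) : E2 := EuclideanSpace.single i 1

lemma gd_apply (p : ℝ) (x v : E2) : gd p x v = u1 p (x 0) * v 0 + u1 p (x 1) * v 1 := by
  simp [gd, PiLp.proj_apply]

lemma e2_apply (i j : Fin 2) : e2 i j = if j = i then 1 else 0 := by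
  simp [e2, EuclideanSpace.single_apply]

lemma gd_apply_e (p : ℝ) (x : E2) (j : Fin 2) : gd p x (e2 j) = u1 p (x j) := by
  fin_cases j <;> simp [gd_apply, e2_apply]

def hfun (p : ℝ) (j : Fin 2) (y : E2) : ℝ := phi1 p (gfun p y) * u1 p (y j)

def D2 (p : ℝ) (j : Fin 2) (x : E2) : E2 →L[ℝ] ℝ :=
  (u1 p (x j) * phi2 p (gfun p x)) • gd p x +
    (phi1 p (gfun p x) * u2 p (x j)) • (EuclideanSpace.proj j : E2 →L[ℝ] ℝ)

lemma hasFDerivAt_hfun (hp : 2 ≤ p) {x : E2} (hx : x ≠ 0) (j : Fin 2) :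
    HasFDerivAt (hfun p j) (D2 p j x) x := by
  have hA : HasFDerivAt (phi1 p ∘ gfun p) (phi2 p (gfun p x) • gd p x) x :=
    (hasDerivAt_phi1 (gfun_pos hp hx).ne').comp_hasFDerivAt x (hasFDerivAt_g hp x)
  have hB : HasFDerivAt (u1 p ∘ ⇑(EuclideanSpace.proj j : E2 →L[ℝ] ℝ))
      (u2 p (x j) • (EuclideanSpace.proj j : E2 →L[ℝ] ℝ)) x :=
    (hasDerivAt_u1 hp (x j)).comp_hasFDerivAt x
      ((EuclideanSpace.proj j : E2 →L[ℝ] ℝ).hasFDerivAt (x := x))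
  have h := hA.mul hB
  have heq : D2 p j x =
      (phi1 p ∘ gfun p) x • (u2 p (x j) • (EuclideanSpace.proj j : E2 →L[ℝ] ℝ)) +
        (u1 p ∘ ⇑(EuclideanSpace.proj j : E2 →L[ℝ] ℝ)) x •
          (phi2 p (gfun p x) • gd p x) := by
    rw [D2]
    simp only [Function.comp_apply, PiLp.proj_apply, smul_smul]
    module
  rw [← heq] at h
  exact h

def Ent (p : ℝ) (i j : Fin 2) (x : E2) : ℝ :=
  u1 p (x j) * phi2 p (gfun p x) * u1 p (x i) +
    phi1 p (gfun p x) * u2 p (x j) * (if j = i then 1 else 0)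

lemma D2_apply_e (p : ℝ) (j i : Fin 2) (x : E2) : D2 p j x (e2 i) = Ent p i j x := by
  have : (EuclideanSpace.proj j : E2 →L[ℝ] ℝ) (e2 i) = if j = i then 1 else 0 := by
    simp [PiLp.proj_apply, e2_apply]
  simp [D2, Ent, gd_apply_e, this]

lemma fderiv_fderiv_entry (hp : 2 ≤ p) {x : E2} (hx : x ≠ 0) (i j : Fin 2) :
    fderiv ℝ (fderiv ℝ (pNorm p)) x (e2 i) (e2 j) = Ent p i j x := by
  have hU : IsOpen ({0}ᶜ : Set E2) := isOpen_compl_singleton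
  have hmem : ({0}ᶜ : Set E2) ∈ nhds x := hU.mem_nhds hx
  have hct : ContDiffAt ℝ 2 (pNorm p) x := (contDiffOn_pNorm hp).contDiffAt hmem
  have hdf : DifferentiableAt ℝ (fderiv ℝ (pNorm p)) x :=
    (hct.fderiv_right (m := 1) (by norm_num)).differentiableAt one_ne_zero
  set L : (E2 →L[ℝ] ℝ) →L[ℝ] ℝ := ContinuousLinearMap.apply ℝ ℝ (e2 j) with hL
  have h1 : HasFDerivAt (fun y => L (fderiv ℝ (pNorm p) y))
      (L.comp (fderiv ℝ (fderiv ℝ (pNorm p)) x)) x := L.hasFDerivAt.comp x hdf.hasFDerivAt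
  have h2 : (fun y => L (fderiv ℝ (pNorm p) y)) =ᶠ[nhds x] hfun p j := by
    filter_upwards [hmem] with y hy
    have hy' : y ≠ 0 := hy
    rw [hL, fderiv_pNorm hp hy']
    simp only [ContinuousLinearMap.apply_apply, ContinuousLinearMap.coe_smul',
      Pi.smul_apply, smul_eq_mul, hfun]
    rw [gd_apply_e]
  have h3 : L.comp (fderiv ℝ (fderiv ℝ (pNorm p)) x) = D2 p j x := by
    rw [← h1.fderiv, h2.fderiv_eq, (hasFDerivAt_hfun hp hx j).fderiv]
  have h4 : fderiv ℝ (fderiv ℝ (pNorm p)) x (e2 i) (e2 j)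
      = (L.comp (fderiv ℝ (fderiv ℝ (pNorm p)) x)) (e2 i) := rfl
  rw [h4, h3, D2_apply_e]

/-! ### Hölder machinery -/

lemma abs_coord_le (x : E2) (i : Fin 2) : |x i| ≤ ‖x‖ := by
  rw [EuclideanSpace.norm_eq, ← Real.sqrt_sq_eq_abs]
  apply Real.sqrt_le_sqrt
  have h := Finset.single_le_sum (f := fun j => ‖x j‖ ^ 2)
    (fun j _ => sq_nonneg _) (Finset.mem_univ i)
  simpa [Real.norm_eq_abs, sq_abs] using h

lemma coord_sub_abs_le (x y : E2) (i : Fin 2) : |x i - y i| ≤ ‖x - y‖ := by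
  have := abs_coord_le (x - y) i
  simpa using this

lemma decomp (v : E2) : v = v 0 • e2 0 + v 1 • e2 1 := by
  ext i
  fin_cases i <;> simp [e2_apply]

lemma bilin (S : E2 →L[ℝ] E2 →L[ℝ] ℝ) (a b : E2) :
    S a b = a 0 * b 0 * S (e2 0) (e2 0) + a 0 * b 1 * S (e2 0) (e2 1) +
      a 1 * b 0 * S (e2 1) (e2 0) + a 1 * b 1 * S (e2 1) (e2 1) := by
  conv_lhs => rw [decomp a, decomp b]
  simp only [map_add, map_smul, ContinuousLinearMap.add_apply, ContinuousLinearMap.smul_apply,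
    smul_eq_mul]
  ring

def Hold (δ : ℝ) (K : Set E2) (f : E2 → ℝ) : Prop :=
  ∃ C : ℝ, 0 ≤ C ∧ (∀ x ∈ K, |f x| ≤ C) ∧
    ∀ x ∈ K, ∀ y ∈ K, |f x - f y| ≤ C * ‖x - y‖ ^ δ

lemma Hold.add {δ : ℝ} {K : Set E2} {f g : E2 → ℝ} (hf : Hold δ K f) (hg : Hold δ K g) :
    Hold δ K (fun x => f x + g x) := by
  obtain ⟨C1, hC1, hB1, hH1⟩ := hf
  obtain ⟨C2, hC2, hB2, hH2⟩ := hg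
  refine ⟨C1 + C2, by positivity, fun x hx => ?_, fun x hx y hy => ?_⟩
  · exact (abs_add_le _ _).trans (add_le_add (hB1 x hx) (hB2 x hx))
  · have h : f x + g x - (f y + g y) = (f x - f y) + (g x - g y) := by ring
    rw [h]
    refine (abs_add_le _ _).trans ?_
    have := add_le_add (hH1 x hx y hy) (hH2 x hx y hy)
    linarith

lemma Hold.mul {δ : ℝ} {K : Set E2} {f g : E2 → ℝ} (hf : Hold δ K f) (hg : Hold δ K g) :
    Hold δ K (fun x => f x * g x) := by
  obtain ⟨C1, hC1, hB1, hH1⟩ := hf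
  obtain ⟨C2, hC2, hB2, hH2⟩ := hg
  refine ⟨3 * (C1 * C2), by positivity, fun x hx => ?_, fun x hx y hy => ?_⟩
  · rw [abs_mul]
    nlinarith [hB1 x hx, hB2 x hx, abs_nonneg (f x), abs_nonneg (g x)]
  · have h : f x * g x - f y * g y = f x * (g x - g y) + g y * (f x - f y) := by ring
    rw [h]
    refine (abs_add_le _ _).trans ?_
    rw [abs_mul, abs_mul]
    have e1 : |f x| * |g x - g y| ≤ C1 * (C2 * ‖x - y‖ ^ δ) :=
      mul_le_mul (hB1 x hx) (hH2 x hx y hy) (abs_nonneg _) hC1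
    have e2 : |g y| * |f x - f y| ≤ C2 * (C1 * ‖x - y‖ ^ δ) :=
      mul_le_mul (hB2 y hy) (hH1 x hx y hy) (abs_nonneg _) hC2
    have hnn : 0 ≤ ‖x - y‖ ^ δ := Real.rpow_nonneg (norm_nonneg _) δ
    nlinarith [mul_nonneg (mul_nonneg hC1 hC2) hnn]

lemma Hold.const {δ : ℝ} {K : Set E2} (c : ℝ) : Hold δ K (fun _ => c) := by
  refine ⟨|c|, abs_nonneg c, fun x _ => le_rfl, fun x _ y _ => ?_⟩
  simp only [sub_self, abs_zero]
  positivity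

lemma hold_of_bound_lip {δ R : ℝ} {K : Set E2} (hδ0 : 0 < δ) (hδ1 : δ ≤ 1) (hR : 0 < R)
    (hKR : ∀ x ∈ K, ‖x‖ ≤ R) {f : E2 → ℝ} {B L : ℝ} (hL : 0 ≤ L)
    (hB : ∀ x ∈ K, |f x| ≤ B)
    (hlip : ∀ x ∈ K, ∀ y ∈ K, |f x - f y| ≤ L * ‖x - y‖) : Hold δ K f := by
  refine ⟨max B (L * (2 * R) ^ (1 - δ)), le_max_of_le_right (by positivity),
    fun x hx => le_max_of_le_left (hB x hx), fun x hx y hy => ?_⟩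
  rcases eq_or_ne x y with rfl | hxy
  · simp only [sub_self, abs_zero]
    positivity
  · have hpos : 0 < ‖x - y‖ := by
      rw [norm_pos_iff]
      exact sub_ne_zero.2 hxy
    have hdiam : ‖x - y‖ ≤ 2 * R := by
      have := norm_sub_le x y
      have h1 := hKR x hx
      have h2 := hKR y hy
      linarith
    have hsplit : ‖x - y‖ = ‖x - y‖ ^ (1 - δ) * ‖x - y‖ ^ δ := by
      rw [← Real.rpow_add hpos, sub_add_cancel, Real.rpow_one]
    have hmono : ‖x - y‖ ^ (1 - δ) ≤ (2 * R) ^ (1 - δ) :=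
      Real.rpow_le_rpow (norm_nonneg _) hdiam (by linarith)
    have hδnn : 0 ≤ ‖x - y‖ ^ δ := Real.rpow_nonneg (norm_nonneg _) δ
    calc |f x - f y| ≤ L * ‖x - y‖ := hlip x hx y hy
      _ = L * (‖x - y‖ ^ (1 - δ) * ‖x - y‖ ^ δ) := by rw [← hsplit]
      _ ≤ L * ((2 * R) ^ (1 - δ) * ‖x - y‖ ^ δ) := by
          apply mul_le_mul_of_nonneg_left _ hL
          exact mul_le_mul_of_nonneg_right hmono hδnn
      _ = L * (2 * R) ^ (1 - δ) * ‖x - y‖ ^ δ := by ring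
      _ ≤ max B (L * (2 * R) ^ (1 - δ)) * ‖x - y‖ ^ δ :=
          mul_le_mul_of_nonneg_right (le_max_right _ _) hδnn

lemma lip_scalar {f f' : ℝ → ℝ} {R L : ℝ}
    (hfd : ∀ t ∈ Icc (-R) R, HasDerivAt f (f' t) t)
    (hbd : ∀ t ∈ Icc (-R) R, |f' t| ≤ L) :
    ∀ a b : ℝ, |a| ≤ R → |b| ≤ R → |f a - f b| ≤ L * |a - b| := by
  intro a b ha hb
  have h := (convex_Icc (-R) R).norm_image_sub_le_of_norm_hasDerivWithin_le
    (fun t ht => (hfd t ht).hasDerivWithinAt)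
    (fun t ht => by rw [Real.norm_eq_abs]; exact hbd t ht)
    (abs_le.1 hb) (abs_le.1 ha)
  simpa [Real.norm_eq_abs] using h

lemma rpow_lip_on {m MB : ℝ} (hm : 0 < m) (hmb : m ≤ MB) (e : ℝ) :
    ∃ L : ℝ, 0 ≤ L ∧ (∀ s ∈ Icc m MB, |s ^ e| ≤ L) ∧
      ∀ s ∈ Icc m MB, ∀ t ∈ Icc m MB, |s ^ e - t ^ e| ≤ L * |s - t| := by
  have hne : (Icc m MB).Nonempty := nonempty_Icc.2 hmb
  have hcomp : IsCompact (Icc m MB) := isCompact_Icc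
  have hpos : ∀ s ∈ Icc m MB, (0:ℝ) < s := fun s hs => lt_of_lt_of_le hm hs.1
  have hc1 : ContinuousOn (fun s : ℝ => |s ^ e|) (Icc m MB) := by
    intro s hs
    exact (ContinuousAt.continuousWithinAt
      (((Real.continuousAt_rpow_const s e (Or.inl (hpos s hs).ne')).abs)))
  have hc2 : ContinuousOn (fun s : ℝ => |e * s ^ (e - 1)|) (Icc m MB) := by
    intro s hs
    exact (ContinuousAt.continuousWithinAt
      ((((Real.continuousAt_rpow_const s (e-1) (Or.inl (hpos s hs).ne')).const_mul e).abs)))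
  obtain ⟨z1, hz1m, hz1⟩ := hcomp.exists_isMaxOn hne hc1
  obtain ⟨z2, hz2m, hz2⟩ := hcomp.exists_isMaxOn hne hc2
  set L1 := |z1 ^ e|
  set L2 := |e * z2 ^ (e - 1)|
  refine ⟨max L1 L2, le_max_of_le_left (abs_nonneg _), fun s hs => ?_, fun s hs t ht => ?_⟩
  · exact le_max_of_le_left (isMaxOn_iff.1 hz1 s hs)
  · have h := (convex_Icc m MB).norm_image_sub_le_of_norm_hasDerivWithin_le
      (f := fun s : ℝ => s ^ e) (f' := fun s => e * s ^ (e - 1)) (C := max L1 L2)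
      (fun u hu => (Real.hasDerivAt_rpow_const (Or.inl (hpos u hu).ne')).hasDerivWithinAt)
      (fun u hu => by
        rw [Real.norm_eq_abs]
        exact le_max_of_le_right (isMaxOn_iff.1 hz2 u hu))
      ht hs
    simpa [Real.norm_eq_abs] using h

lemma real_subadd {s t qq : ℝ} (h0 : 0 ≤ qq) (h1 : qq ≤ 1) (hs : 0 ≤ s) (ht : 0 ≤ t) :
    (s + t) ^ qq ≤ s ^ qq + t ^ qq := by
  have h := NNReal.rpow_add_le_add_rpow s.toNNReal t.toNNReal h0 h1
  have h2 := NNReal.coe_le_coe.2 h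
  push_cast at h2
  rwa [Real.coe_toNNReal _ hs, Real.coe_toNNReal _ ht] at h2

lemma rpow_sub_le {a b qq : ℝ} (hqq0 : 0 < qq) (hqq1 : qq ≤ 1) (ha : 0 ≤ a) (hb : 0 ≤ b) :
    |a ^ qq - b ^ qq| ≤ |a - b| ^ qq := by
  wlog hab : b ≤ a generalizing a b
  · rw [abs_sub_comm, abs_sub_comm a b]
    exact this hb ha (le_of_not_ge hab)
  have h1 : a ^ qq ≤ (a - b) ^ qq + b ^ qq := by
    have h := real_subadd hqq0.le hqq1 (sub_nonneg.2 hab) hb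
    rwa [sub_add_cancel] at h
  have h2 : b ^ qq ≤ a ^ qq := Real.rpow_le_rpow hb hab hqq0.le
  rw [abs_of_nonneg (sub_nonneg.2 h2), abs_of_nonneg (sub_nonneg.2 hab)]
  linarith

lemma abs_mul_w {r : ℝ} (hr : 0 < r + 1) (t : ℝ) : |t * w r t| = |t| ^ (r + 1) := by
  rcases eq_or_ne t 0 with rfl | ht
  · simp [Real.zero_rpow (ne_of_gt hr)]
  · rw [abs_mul, w_eq_abs, abs_of_nonneg (Real.rpow_nonneg (abs_nonneg t) r)]
    rw [show |t| * |t| ^ r = |t| ^ (1:ℝ) * |t| ^ r by rw [Real.rpow_one],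
      ← Real.rpow_add (abs_pos.2 ht)]
    congr 1
    ring

/-- The Hölder exponent. -/
def del (q : ℝ) : ℝ := if q ≤ 0 then 1 else min q 1

lemma del_pos (q : ℝ) : 0 < del q := by
  rw [del]
  split_ifs with h
  · norm_num
  · exact lt_min (lt_of_not_ge h) one_pos

lemma del_le_one (q : ℝ) : del q ≤ 1 := by
  rw [del]
  split_ifs with h
  · exact le_refl 1
  · exact min_le_right _ _

lemma hold_w_core {q R : ℝ} (hq : 0 ≤ q) (hR : 0 < R) :
    ∃ C : ℝ, 0 ≤ C ∧ ∀ a b : ℝ, |a| ≤ R → |b| ≤ R →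
      |w q a - w q b| ≤ C * |a - b| ^ del q := by
  rcases le_or_gt q 0 with hq0 | hq0
  · have hq' : q = 0 := le_antisymm hq0 hq
    subst hq'
    exact ⟨0, le_rfl, fun a b _ _ => by
      rw [w_zero, w_zero, sub_self, abs_zero, zero_mul]⟩
  rcases le_or_gt q 1 with hq1 | hq1
  · have hdel : del q = q := by
      rw [del, if_neg (not_le.2 hq0), min_eq_left hq1]
    refine ⟨1, zero_le_one, fun a b _ _ => ?_⟩
    rw [hdel, one_mul, w_eq_abs, w_eq_abs]
    refine (rpow_sub_le hq0 hq1 (abs_nonneg a) (abs_nonneg b)).trans ?_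
    exact Real.rpow_le_rpow (abs_nonneg _) (abs_abs_sub_abs_le_abs_sub a b) hq
  · have hdel : del q = 1 := by
      rw [del, if_neg (not_le.2 (by linarith : (0:ℝ) < q)), min_eq_right hq1.le]
    have hbd : ∀ t ∈ Icc (-R) R, |q * (t * w (q - 2) t)| ≤ q * R ^ (q - 2 + 1) := by
      intro t ht
      rw [abs_mul, abs_of_nonneg (by linarith : (0:ℝ) ≤ q),
        abs_mul_w (by linarith : (0:ℝ) < (q - 2) + 1)]
      have habs : |t| ≤ R := abs_le.2 ⟨ht.1, ht.2⟩
      exact mul_le_mul_of_nonneg_left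
        (Real.rpow_le_rpow (abs_nonneg t) habs (by linarith)) (by linarith)
    refine ⟨q * R ^ (q - 2 + 1), by positivity, fun a b ha hb => ?_⟩
    rw [hdel, Real.rpow_one]
    exact lip_scalar (fun t _ => hasDerivAt_w hq1 t) hbd a b ha hb

lemma hold_Ent {p : ℝ} (hp : 2 ≤ p) {K : Set E2} (hKU : K ⊆ ({0}ᶜ : Set E2))
    (hKc : IsCompact K) (hne : K.Nonempty) (i j : Fin 2) :
    Hold (del (p - 2)) K (Ent p i j) := by
  have hδ0 : 0 < del (p - 2) := del_pos _
  have hδ1 : del (p - 2) ≤ 1 := del_le_one _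
  have hq : 0 ≤ p - 2 := by linarith
  have hppos : (0:ℝ) < p := by linarith
  obtain ⟨R0, hR0⟩ := hKc.isBounded.exists_norm_le
  set R := max R0 1 with hRdef
  have hRpos : (0:ℝ) < R := lt_of_lt_of_le one_pos (le_max_right _ _)
  have hKR : ∀ x ∈ K, ‖x‖ ≤ R := fun x hx => (hR0 x hx).trans (le_max_left _ _)
  have hcoordR : ∀ x ∈ K, ∀ i : Fin 2, |x i| ≤ R :=
    fun x hx i => (abs_coord_le x i).trans (hKR x hx)
  have hgc : ContinuousOn (gfun p) K := (contDiff_g hp).continuous.continuousOn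
  obtain ⟨z1, hz1K, hz1⟩ := hKc.exists_isMinOn hne hgc
  obtain ⟨z2, hz2K, hz2⟩ := hKc.exists_isMaxOn hne hgc
  set m := gfun p z1 with hmdef
  set MB := gfun p z2 with hMBdef
  have hm : 0 < m := gfun_pos hp (hKU hz1K)
  have hmb : m ≤ MB := isMinOn_iff.1 hz1 z2 hz2K
  have hgK : ∀ x ∈ K, gfun p x ∈ Icc m MB :=
    fun x hx => ⟨isMinOn_iff.1 hz1 x hx, isMaxOn_iff.1 hz2 x hx⟩
  -- w p is Lipschitz on [-R, R], hence g is Lipschitz on K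
  have hu1bdICC : ∀ t ∈ Icc (-R) R, |u1 p t| ≤ p * R ^ (p - 2 + 1) := by
    intro t ht
    have habs : |t| ≤ R := abs_le.2 ⟨ht.1, ht.2⟩
    rw [u1, abs_mul, abs_of_nonneg hppos.le, abs_mul_w (by linarith) t]
    exact mul_le_mul_of_nonneg_left
      (Real.rpow_le_rpow (abs_nonneg t) habs (by linarith)) hppos.le
  have hwlip : ∀ a b : ℝ, |a| ≤ R → |b| ≤ R →
      |w p a - w p b| ≤ (p * R ^ (p - 2 + 1)) * |a - b| :=
    lip_scalar (fun t _ => hasDerivAt_u hp t) hu1bdICC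
  have hLwn : 0 ≤ p * R ^ (p - 2 + 1) :=
    mul_nonneg hppos.le (Real.rpow_nonneg hRpos.le _)
  set Lg := 2 * (p * R ^ (p - 2 + 1)) with hLgdef
  have hLgn : 0 ≤ Lg := by positivity
  have hglip : ∀ x ∈ K, ∀ y ∈ K, |gfun p x - gfun p y| ≤ Lg * ‖x - y‖ := by
    intro x hx y hy
    have h0 := hwlip (x 0) (y 0) (hcoordR x hx 0) (hcoordR y hy 0)
    have h1 := hwlip (x 1) (y 1) (hcoordR x hx 1) (hcoordR y hy 1)
    have hc0 := coord_sub_abs_le x y 0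
    have hc1 := coord_sub_abs_le x y 1
    have habs : |gfun p x - gfun p y| ≤
        |w p (x 0) - w p (y 0)| + |w p (x 1) - w p (y 1)| := by
      have hsum : gfun p x - gfun p y
          = (w p (x 0) - w p (y 0)) + (w p (x 1) - w p (y 1)) := by
        rw [gfun, gfun]; ring
      rw [hsum]; exact abs_add_le _ _
    rw [hLgdef]
    nlinarith [mul_le_mul_of_nonneg_left hc0 hLwn, mul_le_mul_of_nonneg_left hc1 hLwn]
  -- phi1 ∘ g and phi2 ∘ g
  obtain ⟨L1, hL1n, hB1, hH1⟩ := rpow_lip_on hm hmb (1/p - 1)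
  obtain ⟨L2, hL2n, hB2, hH2⟩ := rpow_lip_on hm hmb (1/p - 2)
  have hphi1 : Hold (del (p - 2)) K (fun x => phi1 p (gfun p x)) := by
    refine hold_of_bound_lip hδ0 hδ1 hRpos hKR (B := |1/p| * L1) (L := |1/p| * (L1 * Lg))
      (mul_nonneg (abs_nonneg _) (mul_nonneg hL1n hLgn)) (fun x hx => ?_) (fun x hx y hy => ?_)
    · rw [phi1, abs_mul]
      exact mul_le_mul_of_nonneg_left (hB1 _ (hgK x hx)) (abs_nonneg _)
    · have hdiff : phi1 p (gfun p x) - phi1 p (gfun p y)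
          = (1/p) * ((gfun p x) ^ (1/p - 1) - (gfun p y) ^ (1/p - 1)) := by
        rw [phi1, phi1]; ring
      rw [hdiff, abs_mul]
      calc |1/p| * |(gfun p x) ^ (1/p - 1) - (gfun p y) ^ (1/p - 1)|
          ≤ |1/p| * (L1 * |gfun p x - gfun p y|) :=
            mul_le_mul_of_nonneg_left (hH1 _ (hgK x hx) _ (hgK y hy)) (abs_nonneg _)
        _ ≤ |1/p| * (L1 * (Lg * ‖x - y‖)) := by
            refine mul_le_mul_of_nonneg_left ?_ (abs_nonneg _)
            exact mul_le_mul_of_nonneg_left (hglip x hx y hy) hL1n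
        _ = |1/p| * (L1 * Lg) * ‖x - y‖ := by ring
  have hphi2 : Hold (del (p - 2)) K (fun x => phi2 p (gfun p x)) := by
    refine hold_of_bound_lip hδ0 hδ1 hRpos hKR (B := |1/p * (1/p - 1)| * L2)
      (L := |1/p * (1/p - 1)| * (L2 * Lg))
      (mul_nonneg (abs_nonneg _) (mul_nonneg hL2n hLgn)) (fun x hx => ?_) (fun x hx y hy => ?_)
    · have hval : phi2 p (gfun p x) = (1/p * (1/p - 1)) * (gfun p x) ^ (1/p - 2) := by
        rw [phi2]; ring
      rw [hval, abs_mul]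
      exact mul_le_mul_of_nonneg_left (hB2 _ (hgK x hx)) (abs_nonneg _)
    · have hdiff : phi2 p (gfun p x) - phi2 p (gfun p y)
          = (1/p * (1/p - 1)) * ((gfun p x) ^ (1/p - 2) - (gfun p y) ^ (1/p - 2)) := by
        rw [phi2, phi2]; ring
      rw [hdiff, abs_mul]
      calc |1/p * (1/p - 1)| * |(gfun p x) ^ (1/p - 2) - (gfun p y) ^ (1/p - 2)|
          ≤ |1/p * (1/p - 1)| * (L2 * |gfun p x - gfun p y|) :=
            mul_le_mul_of_nonneg_left (hH2 _ (hgK x hx) _ (hgK y hy)) (abs_nonneg _)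
        _ ≤ |1/p * (1/p - 1)| * (L2 * (Lg * ‖x - y‖)) := by
            refine mul_le_mul_of_nonneg_left ?_ (abs_nonneg _)
            exact mul_le_mul_of_nonneg_left (hglip x hx y hy) hL2n
        _ = |1/p * (1/p - 1)| * (L2 * Lg) * ‖x - y‖ := by ring
  -- u1 coordinate blocks
  have hwbd : ∀ t : ℝ, |t| ≤ R → w (p - 2) t ≤ R ^ (p - 2) := by
    intro t ht
    rw [w_eq_abs]
    exact Real.rpow_le_rpow (abs_nonneg t) ht hq
  have hu2bdICC : ∀ t ∈ Icc (-R) R, |u2 p t| ≤ p * (p - 1) * R ^ (p - 2) := by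
    intro t ht
    have habs : |t| ≤ R := abs_le.2 ⟨ht.1, ht.2⟩
    have : |u2 p t| = p * (p - 1) * w (p - 2) t := by
      rw [u2, abs_mul, abs_mul, abs_of_nonneg hppos.le,
        abs_of_nonneg (by linarith : (0:ℝ) ≤ 1 + (p - 2)),
        abs_of_nonneg (w_nonneg _ _)]
      ring
    rw [this]
    exact mul_le_mul_of_nonneg_left (hwbd t habs) (by nlinarith)
  have hu1lip := lip_scalar (fun t _ => hasDerivAt_u1 hp t) hu2bdICC
  have hu1 : ∀ i : Fin 2, Hold (del (p - 2)) K (fun x => u1 p (x i)) := by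
    intro i
    refine hold_of_bound_lip hδ0 hδ1 hRpos hKR (B := p * R ^ (p - 2 + 1))
      (L := p * (p - 1) * R ^ (p - 2))
      (mul_nonneg (by nlinarith) (Real.rpow_nonneg hRpos.le _))
      (fun x hx => hu1bdICC (x i) (abs_le.1 (hcoordR x hx i)))
      (fun x hx y hy => ?_)
    calc |u1 p (x i) - u1 p (y i)|
        ≤ p * (p - 1) * R ^ (p - 2) * |x i - y i| :=
          hu1lip (x i) (y i) (hcoordR x hx i) (hcoordR y hy i)
      _ ≤ p * (p - 1) * R ^ (p - 2) * ‖x - y‖ :=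
          mul_le_mul_of_nonneg_left (coord_sub_abs_le x y i)
            (mul_nonneg (by nlinarith) (Real.rpow_nonneg hRpos.le _))
  -- u2 coordinate blocks (genuinely Hölder)
  obtain ⟨Cq, hCqn, hCq⟩ := hold_w_core hq hRpos
  have hu2 : ∀ jj : Fin 2, Hold (del (p - 2)) K (fun x => u2 p (x jj)) := by
    intro jj
    refine ⟨p * (p - 1) * max (R ^ (p - 2)) Cq,
      mul_nonneg (by nlinarith) (le_max_of_le_right hCqn), fun x hx => ?_, fun x hx y hy => ?_⟩
    · have hval : |u2 p (x jj)| = p * (p - 1) * w (p - 2) (x jj) := by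
        rw [u2, abs_mul, abs_mul, abs_of_nonneg hppos.le,
          abs_of_nonneg (by linarith : (0:ℝ) ≤ 1 + (p - 2)),
          abs_of_nonneg (w_nonneg _ _)]
        ring
      rw [hval]
      exact mul_le_mul_of_nonneg_left
        ((hwbd (x jj) (hcoordR x hx jj)).trans (le_max_left _ _)) (by nlinarith)
    · have hval : u2 p (x jj) - u2 p (y jj)
          = (p * (1 + (p - 2))) * (w (p - 2) (x jj) - w (p - 2) (y jj)) := by
        rw [u2, u2]; ring
      rw [hval, abs_mul, abs_of_nonneg (by nlinarith : (0:ℝ) ≤ p * (1 + (p - 2)))]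
      have hcore := hCq (x jj) (y jj) (hcoordR x hx jj) (hcoordR y hy jj)
      have hmono : |x jj - y jj| ^ del (p - 2) ≤ ‖x - y‖ ^ del (p - 2) :=
        Real.rpow_le_rpow (abs_nonneg _) (coord_sub_abs_le x y jj) hδ0.le
      calc (p * (1 + (p - 2))) * |w (p - 2) (x jj) - w (p - 2) (y jj)|
          ≤ (p * (1 + (p - 2))) * (Cq * |x jj - y jj| ^ del (p - 2)) :=
            mul_le_mul_of_nonneg_left hcore (by nlinarith)
        _ ≤ (p * (1 + (p - 2))) * (Cq * ‖x - y‖ ^ del (p - 2)) := by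
            refine mul_le_mul_of_nonneg_left ?_ (by nlinarith)
            exact mul_le_mul_of_nonneg_left hmono hCqn
        _ ≤ p * (p - 1) * max (R ^ (p - 2)) Cq * ‖x - y‖ ^ del (p - 2) := by
            have h1 : Cq ≤ max (R ^ (p - 2)) Cq := le_max_right _ _
            have h2 : 0 ≤ ‖x - y‖ ^ del (p - 2) := Real.rpow_nonneg (norm_nonneg _) _
            have h3 : (0:ℝ) ≤ p * (1 + (p - 2)) := by nlinarith
            have h4 := mul_le_mul_of_nonneg_left (mul_le_mul_of_nonneg_right h1 h2) h3
            calc (p * (1 + (p - 2))) * (Cq * ‖x - y‖ ^ del (p - 2))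
                ≤ (p * (1 + (p - 2))) * (max (R ^ (p - 2)) Cq * ‖x - y‖ ^ del (p - 2)) := by
                  calc (p * (1 + (p - 2))) * (Cq * ‖x - y‖ ^ del (p - 2))
                      = (p * (1 + (p - 2))) * (Cq * ‖x - y‖ ^ del (p - 2)) := rfl
                    _ ≤ _ := by
                        refine mul_le_mul_of_nonneg_left ?_ h3
                        exact mul_le_mul_of_nonneg_right h1 h2
              _ = p * (p - 1) * max (R ^ (p - 2)) Cq * ‖x - y‖ ^ del (p - 2) := by ring
  exact (((hu1 j).mul hphi2).mul (hu1 i)).add ((hphi1.mul (hu2 j)).mul (Hold.const _))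

lemma term_bd {a b d na nb Ch : ℝ} (ha : |a| ≤ na) (hb : |b| ≤ nb) (hd : |d| ≤ Ch) :
    |a * b * d| ≤ na * nb * Ch := by
  rw [abs_mul, abs_mul]
  have h1 : 0 ≤ na := (abs_nonneg a).trans ha
  have h2 : 0 ≤ nb := (abs_nonneg b).trans hb
  exact mul_le_mul (mul_le_mul ha hb (abs_nonneg b) h1) hd (abs_nonneg d) (mul_nonneg h1 h2)

end PNormProof

open PNormProof

/-- for `2 ≤ p < ∞` the `p`-norm, restricted to `ℝ² \ {0}`, is of
class `C^{2,δ}` for some `δ ∈ (0,1]`. -/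
theorem pNorm_C2delta_of_two_le
    (p : ℝ) (hp : 2 ≤ p) :
    ∃ δ : ℝ, 0 < δ ∧ δ ≤ 1 ∧
      ContDiffOn ℝ 2 (pNorm p) ({0}ᶜ : Set (EuclideanSpace ℝ (Fin 2))) ∧
      ∀ K : Set (EuclideanSpace ℝ (Fin 2)), K ⊆ {0}ᶜ → IsCompact K →
        ∃ M : ℝ, ∀ x ∈ K, ∀ y ∈ K,
          ‖iteratedFDerivWithin ℝ 2 (pNorm p)
              ({0}ᶜ : Set (EuclideanSpace ℝ (Fin 2))) x -
            iteratedFDerivWithin ℝ 2 (pNorm p)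
              ({0}ᶜ : Set (EuclideanSpace ℝ (Fin 2))) y‖ ≤ M * ‖x - y‖ ^ δ := by
  refine ⟨del (p - 2), del_pos _, del_le_one _, contDiffOn_pNorm hp, ?_⟩
  intro K hKU hKc
  rcases K.eq_empty_or_nonempty with rfl | hne
  · exact ⟨0, fun x hx => absurd hx (notMem_empty x)⟩
  obtain ⟨C00, hC00n, hB00, hH00⟩ := hold_Ent hp hKU hKc hne 0 0
  obtain ⟨C01, hC01n, hB01, hH01⟩ := hold_Ent hp hKU hKc hne 0 1
  obtain ⟨C10, hC10n, hB10, hH10⟩ := hold_Ent hp hKU hKc hne 1 0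
  obtain ⟨C11, hC11n, hB11, hH11⟩ := hold_Ent hp hKU hKc hne 1 1
  refine ⟨C00 + C01 + C10 + C11, fun x hx y hy => ?_⟩
  have hx' : x ≠ 0 := hKU hx
  have hy' : y ≠ 0 := hKU hy
  have hhnn : 0 ≤ ‖x - y‖ ^ del (p - 2) := Real.rpow_nonneg (norm_nonneg _) _
  rw [iteratedFDerivWithin_of_isOpen 2 isOpen_compl_singleton (hKU hx),
    iteratedFDerivWithin_of_isOpen 2 isOpen_compl_singleton (hKU hy)]
  refine ContinuousMultilinearMap.opNorm_le_bound
    (mul_nonneg (by linarith) hhnn) (fun v => ?_)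
  have hv : (iteratedFDeriv ℝ 2 (pNorm p) x - iteratedFDeriv ℝ 2 (pNorm p) y) v
      = fderiv ℝ (fderiv ℝ (pNorm p)) x (v 0) (v 1)
        - fderiv ℝ (fderiv ℝ (pNorm p)) y (v 0) (v 1) := by
    rw [ContinuousMultilinearMap.sub_apply, iteratedFDeriv_two_apply, iteratedFDeriv_two_apply]
  have hexp : fderiv ℝ (fderiv ℝ (pNorm p)) x (v 0) (v 1)
        - fderiv ℝ (fderiv ℝ (pNorm p)) y (v 0) (v 1)
      = v 0 0 * v 1 0 * (Ent p 0 0 x - Ent p 0 0 y)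
        + v 0 0 * v 1 1 * (Ent p 0 1 x - Ent p 0 1 y)
        + v 0 1 * v 1 0 * (Ent p 1 0 x - Ent p 1 0 y)
        + v 0 1 * v 1 1 * (Ent p 1 1 x - Ent p 1 1 y) := by
    rw [bilin (fderiv ℝ (fderiv ℝ (pNorm p)) x) (v 0) (v 1),
      bilin (fderiv ℝ (fderiv ℝ (pNorm p)) y) (v 0) (v 1)]
    simp only [fderiv_fderiv_entry hp hx', fderiv_fderiv_entry hp hy']
    ring
  have hprod : (∏ i : Fin 2, ‖v i‖) = ‖v 0‖ * ‖v 1‖ := by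
    rw [Fin.prod_univ_two]
  rw [hv, hexp, hprod, Real.norm_eq_abs]
  have t1 := term_bd (abs_coord_le (v 0) 0) (abs_coord_le (v 1) 0) (hH00 x hx y hy)
  have t2 := term_bd (abs_coord_le (v 0) 0) (abs_coord_le (v 1) 1) (hH01 x hx y hy)
  have t3 := term_bd (abs_coord_le (v 0) 1) (abs_coord_le (v 1) 0) (hH10 x hx y hy)
  have t4 := term_bd (abs_coord_le (v 0) 1) (abs_coord_le (v 1) 1) (hH11 x hx y hy)
  have habs4 : ∀ A1 A2 A3 A4 : ℝ, |A1 + A2 + A3 + A4| ≤ |A1| + |A2| + |A3| + |A4| := by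
    intro A1 A2 A3 A4
    calc |A1 + A2 + A3 + A4| ≤ |A1 + A2 + A3| + |A4| := abs_add_le _ _
      _ ≤ (|A1 + A2| + |A3|) + |A4| := add_le_add_left (abs_add_le _ _) _
      _ ≤ ((|A1| + |A2|) + |A3|) + |A4| :=
          add_le_add_left (add_le_add_left (abs_add_le _ _) _) _
  refine (habs4 _ _ _ _).trans ?_
  calc |v 0 0 * v 1 0 * (Ent p 0 0 x - Ent p 0 0 y)|
        + |v 0 0 * v 1 1 * (Ent p 0 1 x - Ent p 0 1 y)|
        + |v 0 1 * v 1 0 * (Ent p 1 0 x - Ent p 1 0 y)|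
        + |v 0 1 * v 1 1 * (Ent p 1 1 x - Ent p 1 1 y)|
      ≤ ‖v 0‖ * ‖v 1‖ * (C00 * ‖x - y‖ ^ del (p - 2))
        + ‖v 0‖ * ‖v 1‖ * (C01 * ‖x - y‖ ^ del (p - 2))
        + ‖v 0‖ * ‖v 1‖ * (C10 * ‖x - y‖ ^ del (p - 2))
        + ‖v 0‖ * ‖v 1‖ * (C11 * ‖x - y‖ ^ del (p - 2)) := by
        exact add_le_add (add_le_add (add_le_add t1 t2) t3) t4
    _ = (C00 + C01 + C10 + C11) * ‖x - y‖ ^ del (p - 2) * (‖v 0‖ * ‖v 1‖) := by ring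
end
end
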